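/- arXiv:2410.08939 — 4 statements merged into one kernel-verified Lean document; each statement's English description precedes it below -/
import Mathlib

section
/- For a Gaussian target, the composition of block-wise common-random-numbers couplings of the Gibbs full-conditional updates is W₂-optimal at every number of steps: for every integer n ≥ 1 and every pair of starting points (x, y), the law of (X^n, Y^n) under n iterations of the coupled kernel P̄^{c*} is a coupling of P^n(x,·) and P^n(y,·) that minimizes ∫‖u − v‖² γ(du, dv) over all couplings γ of P^n(x,·) and P^n(y,·); the minimal value equals ‖B^n(x − y)‖², where B is the autoregressive matrix of P (i.e. P(x,·) = N(Bx + b, Σ − BΣBᵀ)). -/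
open MeasureTheory ProbabilityTheory Matrix Filter
open scoped ENNReal NNReal Classical

noncomputable section

/-- Standard Gaussian measure on `ι → ℝ`. -/
def stdGaussian (ι : Type*) [Fintype ι] : Measure (ι → ℝ) :=
  Measure.pi fun _ => gaussianReal 0 1

/-- The state space of a `K`-block Gibbs sampler with block sizes `I k`. -/
abbrev GState (K : ℕ) (I : Fin K → ℕ) := ∀ k : Fin K, (Fin (I k) → ℝ)

/-- Squared Euclidean norm on the block state space. -/
def gNormSq {K : ℕ} {I : Fin K → ℕ} (v : GState K I) : ℝ := ∑ k, ∑ i, (v k i) ^ 2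

/-- The block-`k` Gibbs update: replace block `k` by its full-conditional mean plus
`R k` applied to the innovation `z`, where `A` collects the regression matrices and
`R k` is a square root of the conditional covariance `Q_kk⁻¹`. -/
def gibbsUpdate {K : ℕ} {I : Fin K → ℕ} (μv : GState K I)
    (A : ∀ k l : Fin K, Matrix (Fin (I k)) (Fin (I l)) ℝ)
    (R : ∀ k : Fin K, Matrix (Fin (I k)) (Fin (I k)) ℝ)
    (x : GState K I) (k : Fin K) (z : Fin (I k) → ℝ) : GState K I :=
  Function.update x k
    (μv k + (∑ j ∈ Finset.univ.erase k, (A k j).mulVec (x j - μv j)) + (R k).mulVec z)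

/-- One full sweep of the blocked Gibbs sampler in the updating order `σ 0, …, σ (K-1)`,
using the innovations `zs`. -/
def gibbsSweep {K : ℕ} {I : Fin K → ℕ} (μv : GState K I)
    (A : ∀ k l : Fin K, Matrix (Fin (I k)) (Fin (I l)) ℝ)
    (R : ∀ k : Fin K, Matrix (Fin (I k)) (Fin (I k)) ℝ) (σ : Equiv.Perm (Fin K))
    (x : GState K I) (zs : ∀ k : Fin K, Fin (I k) → ℝ) : GState K I :=
  ((List.finRange K).map σ).foldl (fun acc k => gibbsUpdate μv A R acc k (zs k)) x

/-- `n` sweeps of the blocked Gibbs sampler driven by the innovations `ζ 0, …, ζ (n-1)`. -/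
def gibbsIter {K : ℕ} {I : Fin K → ℕ} (μv : GState K I)
    (A : ∀ k l : Fin K, Matrix (Fin (I k)) (Fin (I l)) ℝ)
    (R : ∀ k : Fin K, Matrix (Fin (I k)) (Fin (I k)) ℝ) (σ : Equiv.Perm (Fin K))
    (n : ℕ) (ζ : Fin n → ∀ k : Fin K, Fin (I k) → ℝ) (x : GState K I) : GState K I :=
  (List.finRange n).foldl (fun acc i => gibbsSweep μv A R σ acc (ζ i)) x

/-- Law of the innovations of `n` sweeps: i.i.d. standard Gaussians for each sweep and block. -/
def innovLaw (K : ℕ) (I : Fin K → ℕ) (n : ℕ) :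
    Measure (Fin n → ∀ k : Fin K, Fin (I k) → ℝ) :=
  Measure.pi fun _ => Measure.pi fun k => stdGaussian (Fin (I k))

/-- The `n`-step marginal law `Pⁿ(x, ·)` of the blocked Gibbs sampler started at `x`. -/
def nStepLaw {K : ℕ} {I : Fin K → ℕ} (μv : GState K I)
    (A : ∀ k l : Fin K, Matrix (Fin (I k)) (Fin (I l)) ℝ)
    (R : ∀ k : Fin K, Matrix (Fin (I k)) (Fin (I k)) ℝ) (σ : Equiv.Perm (Fin K))
    (n : ℕ) (x : GState K I) : Measure (GState K I) :=
  (innovLaw K I n).map (fun ζ => gibbsIter μv A R σ n ζ x)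

/-- Law of `(Xⁿ, Yⁿ)` under `n` iterations of the composed common-random-numbers coupling
`P̄^{c*}`: both chains perform the block updates in the same order, each block update using a
single shared Gaussian innovation. -/
def crnPairLaw {K : ℕ} {I : Fin K → ℕ} (μv : GState K I)
    (A : ∀ k l : Fin K, Matrix (Fin (I k)) (Fin (I l)) ℝ)
    (R : ∀ k : Fin K, Matrix (Fin (I k)) (Fin (I k)) ℝ) (σ : Equiv.Perm (Fin K))
    (n : ℕ) (x y : GState K I) : Measure (GState K I × GState K I) :=
  (innovLaw K I n).map (fun ζ => (gibbsIter μv A R σ n ζ x, gibbsIter μv A R σ n ζ y))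

/-- The positive semidefinite square root of a positive semidefinite matrix
(as in the older Mathlib, where it has since been removed). -/
def Matrix.PosSemidef.sqrt {n 𝕜 : Type*} [Fintype n] [DecidableEq n] [RCLike 𝕜]
    [PartialOrder 𝕜]     {A : Matrix n n 𝕜} (hA : A.PosSemidef) : Matrix n n 𝕜 :=
  hA.1.eigenvectorUnitary.1 * diagonal ((↑) ∘ (√·) ∘ hA.1.eigenvalues) *
    (star hA.1.eigenvectorUnitary : Matrix n n 𝕜)

/-- The linear part `v ↦ B v` of the noiseless mean map `x ↦ sweep(x, 0)` of one Gibbs sweep;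
`B` is the autoregressive matrix of the sweep kernel `P(x,·) = N(Bx + b, Σ − BΣBᵀ)`. -/
def sweepLin {K : ℕ} {I : Fin K → ℕ} (μv : GState K I)
    (A : ∀ k l : Fin K, Matrix (Fin (I k)) (Fin (I l)) ℝ)
    (R : ∀ k : Fin K, Matrix (Fin (I k)) (Fin (I k)) ℝ) (σ : Equiv.Perm (Fin K))
    (v : GState K I) : GState K I :=
  gibbsSweep μv A R σ v 0 - gibbsSweep μv A R σ 0 0

/-! ### Auxiliary lemmas -/

section Aux

variable {K : ℕ} {I : Fin K → ℕ}
variable (μv : GState K I)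
variable (A : ∀ k l : Fin K, Matrix (Fin (I k)) (Fin (I l)) ℝ)
variable (R : ∀ k : Fin K, Matrix (Fin (I k)) (Fin (I k)) ℝ)
variable (σ : Equiv.Perm (Fin K))

lemma update_sub (x y : GState K I) (k : Fin K) (a b : Fin (I k) → ℝ) :
    Function.update x k a - Function.update y k b = Function.update (x - y) k (a - b) := by
  funext j
  by_cases h : j = k
  · subst h; simp
  · simp [Function.update_of_ne h]

lemma gibbsUpdate_sub (x y : GState K I) (k : Fin K) (z z' : Fin (I k) → ℝ) :
    gibbsUpdate μv A R x k z - gibbsUpdate μv A R y k z'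
      = gibbsUpdate 0 A R (x - y) k (z - z') := by
  unfold gibbsUpdate
  rw [update_sub]
  congr 1
  simp only [Pi.zero_apply, Pi.sub_apply, sub_zero, zero_add]
  have hterm : ∀ j, (A k j).mulVec (x j - y j)
      = (A k j).mulVec (x j - μv j) - (A k j).mulVec (y j - μv j) := by
    intro j
    rw [← Matrix.mulVec_sub]
    congr 1
    abel
  simp only [hterm, Finset.sum_sub_distrib, Matrix.mulVec_sub]
  abel

lemma gibbsSweep_sub (x y : GState K I) (zs zs' : ∀ k : Fin K, Fin (I k) → ℝ) :
    gibbsSweep μv A R σ x zs - gibbsSweep μv A R σ y zs'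
      = gibbsSweep 0 A R σ (x - y) (zs - zs') := by
  unfold gibbsSweep
  generalize (List.finRange K).map σ = l
  induction l generalizing x y with
  | nil => simp
  | cons k t ih =>
      simp only [List.foldl_cons]
      rw [ih]
      congr 1
      exact gibbsUpdate_sub μv A R x y k (zs k) (zs' k)

lemma gibbsIter_sub (n : ℕ) (ζ ζ' : Fin n → ∀ k : Fin K, Fin (I k) → ℝ)
    (x y : GState K I) :
    gibbsIter μv A R σ n ζ x - gibbsIter μv A R σ n ζ' y
      = gibbsIter 0 A R σ n (ζ - ζ') (x - y) := by
  unfold gibbsIter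
  generalize List.finRange n = l
  induction l generalizing x y with
  | nil => simp
  | cons i t ih =>
      simp only [List.foldl_cons]
      rw [ih]
      congr 1
      exact gibbsSweep_sub μv A R σ x y (ζ i) (ζ' i)

lemma update_smul (c : ℝ) (x : GState K I) (k : Fin K) (a : Fin (I k) → ℝ) :
    Function.update (c • x) k (c • a) = c • Function.update x k a := by
  funext j
  by_cases h : j = k
  · subst h; simp
  · simp [Function.update_of_ne h]

lemma gibbsUpdate_smul (c : ℝ) (x : GState K I) (k : Fin K) (z : Fin (I k) → ℝ) :
    gibbsUpdate 0 A R (c • x) k (c • z) = c • gibbsUpdate 0 A R x k z := by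
  unfold gibbsUpdate
  rw [← update_smul]
  congr 1
  simp only [Pi.zero_apply, Pi.smul_apply, sub_zero, zero_add, Matrix.mulVec_smul,
    smul_add, Finset.smul_sum]

lemma gibbsSweep_smul (c : ℝ) (x : GState K I) (zs : ∀ k : Fin K, Fin (I k) → ℝ) :
    gibbsSweep 0 A R σ (c • x) (c • zs) = c • gibbsSweep 0 A R σ x zs := by
  unfold gibbsSweep
  generalize (List.finRange K).map σ = l
  induction l generalizing x with
  | nil => simp
  | cons k t ih =>
      simp only [List.foldl_cons]
      rw [← ih]
      congr 1
      exact gibbsUpdate_smul A R c x k (zs k)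

lemma gibbsIter_smul (n : ℕ) (c : ℝ) (ζ : Fin n → ∀ k : Fin K, Fin (I k) → ℝ)
    (x : GState K I) :
    gibbsIter 0 A R σ n (c • ζ) (c • x) = c • gibbsIter 0 A R σ n ζ x := by
  unfold gibbsIter
  generalize List.finRange n = l
  induction l generalizing x with
  | nil => simp
  | cons i t ih =>
      simp only [List.foldl_cons]
      rw [← ih]
      congr 1
      exact gibbsSweep_smul A R σ c x (ζ i)

lemma foldl_const_fun {α β : Type*} (f : α → α) (x : α) (l : List β) :
    l.foldl (fun a _ => f a) x = f^[l.length] x := by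
  induction l generalizing x with
  | nil => rfl
  | cons i t ih => simp [ih, Function.iterate_succ_apply]

lemma sweepLin_eq (v : GState K I) :
    sweepLin μv A R σ v = gibbsSweep 0 A R σ v 0 := by
  unfold sweepLin
  rw [gibbsSweep_sub]
  simp

lemma gibbsIter_zero_innov (n : ℕ) (v : GState K I) :
    gibbsIter 0 A R σ n 0 v = (sweepLin μv A R σ)^[n] v := by
  unfold gibbsIter
  have h : (fun (acc : GState K I) (i : Fin n) => gibbsSweep 0 A R σ acc ((0 : Fin n → ∀ k : Fin K, Fin (I k) → ℝ) i))
      = fun acc _ => sweepLin μv A R σ acc := by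
    funext acc i
    rw [sweepLin_eq]
    rfl
  rw [h, foldl_const_fun, List.length_finRange]

lemma gibbsIter_pair_diff (n : ℕ) (ζ : Fin n → ∀ k : Fin K, Fin (I k) → ℝ)
    (x y : GState K I) :
    gibbsIter μv A R σ n ζ x - gibbsIter μv A R σ n ζ y
      = (sweepLin μv A R σ)^[n] (x - y) := by
  rw [gibbsIter_sub, sub_self, gibbsIter_zero_innov μv]

/-- The linear part of the innovations-to-state map of `n` sweeps. -/
def iterLin (n : ℕ) : (Fin n → ∀ k : Fin K, Fin (I k) → ℝ) →ₗ[ℝ] GState K I where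
  toFun := fun ζ => gibbsIter 0 A R σ n ζ 0
  map_add' := fun ζ ζ' => by
    show gibbsIter 0 A R σ n (ζ + ζ') 0
        = gibbsIter 0 A R σ n ζ 0 + gibbsIter 0 A R σ n ζ' 0
    have h := gibbsIter_sub (0 : GState K I) A R σ n (ζ + ζ') ζ' (0 : GState K I) 0
    simp only [add_sub_cancel_right, sub_self, sub_zero] at h
    rw [sub_eq_iff_eq_add] at h
    exact h
  map_smul' := fun c ζ => by
    show gibbsIter 0 A R σ n (c • ζ) 0 = c • gibbsIter 0 A R σ n ζ 0
    have h := gibbsIter_smul A R σ n c ζ (0 : GState K I)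
    rwa [smul_zero] at h

lemma gibbsIter_affine (n : ℕ) (ζ : Fin n → ∀ k : Fin K, Fin (I k) → ℝ)
    (x : GState K I) :
    gibbsIter μv A R σ n ζ x = iterLin A R σ n ζ + gibbsIter μv A R σ n 0 x := by
  have h := gibbsIter_sub μv A R σ n ζ 0 x x
  simp only [sub_self, sub_zero] at h
  rw [sub_eq_iff_eq_add] at h
  rw [h]
  rfl

lemma continuous_gibbsIter (n : ℕ) (x : GState K I) :
    Continuous fun ζ : Fin n → ∀ k : Fin K, Fin (I k) → ℝ => gibbsIter μv A R σ n ζ x := by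
  have h : (fun ζ : Fin n → ∀ k : Fin K, Fin (I k) → ℝ => gibbsIter μv A R σ n ζ x)
      = fun ζ => iterLin A R σ n ζ + gibbsIter μv A R σ n 0 x :=
    funext fun ζ => gibbsIter_affine μv A R σ n ζ x
  rw [h]
  exact ((iterLin A R σ n).continuous_of_finiteDimensional).add continuous_const

lemma measurable_gibbsIter (n : ℕ) (x : GState K I) :
    Measurable fun ζ : Fin n → ∀ k : Fin K, Fin (I k) → ℝ => gibbsIter μv A R σ n ζ x :=
  (continuous_gibbsIter μv A R σ n x).measurable

lemma measurable_gNormSq : Measurable (gNormSq (K := K) (I := I)) := by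
  unfold gNormSq
  exact Finset.measurable_sum _ fun k _ =>
    Finset.measurable_sum _ fun i _ =>
      ((measurable_pi_apply i).comp (measurable_pi_apply k)).pow_const 2

lemma gNormSq_nonneg (v : GState K I) : 0 ≤ gNormSq v :=
  Finset.sum_nonneg fun _ _ => Finset.sum_nonneg fun _ _ => sq_nonneg _

end Aux

section MeasureAux

/-- Pushforward of a finite product of probability measures under a coordinate
evaluation map is the corresponding factor. -/
lemma pi_map_eval {ι : Type*} [Fintype ι] {α : ι → Type*} [∀ i, MeasurableSpace (α i)]
    (μ : ∀ i, Measure (α i)) [∀ i, IsProbabilityMeasure (μ i)] (i : ι) :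
    (Measure.pi μ).map (Function.eval i) = μ i := by
  ext s hs
  rw [Measure.map_apply (measurable_pi_apply i) hs, Set.eval_preimage, Measure.pi_pi]
  rw [Finset.prod_eq_single i (fun j _ hj => by
    simp [Function.update_of_ne hj]) (by simp)]
  simp

lemma integrable_id_gaussianReal : Integrable (fun x : ℝ => x) (gaussianReal 0 1) := by
  rw [gaussianReal_of_var_ne_zero 0 one_ne_zero]
  rw [integrable_withDensity_iff (measurable_gaussianPDF 0 1)
    (ae_of_all _ fun x => ENNReal.ofReal_lt_top)]
  have h : Integrable (fun x : ℝ => (√(2 * Real.pi))⁻¹ * (x * Real.exp (-(2⁻¹) * x ^ 2)))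
      volume := (integrable_mul_exp_neg_mul_sq (by norm_num)).const_mul _
  refine h.congr (ae_of_all _ fun x => ?_)
  simp only [gaussianPDF, gaussianPDFReal,
    ENNReal.toReal_ofReal (gaussianPDFReal_nonneg 0 1 x)]
  push_cast
  rw [ENNReal.toReal_ofReal (by positivity)]
  ring_nf

end MeasureAux

section InnovAux

variable {K : ℕ} {I : Fin K → ℕ}

instance innovLaw_isProbabilityMeasure (n : ℕ) :
    IsProbabilityMeasure (innovLaw K I n) := by
  unfold innovLaw _root_.stdGaussian
  infer_instance

instance stdGaussian_isProbabilityMeasure (ι : Type*) [Fintype ι] :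
    IsProbabilityMeasure (stdGaussian ι) := by
  unfold _root_.stdGaussian
  infer_instance

lemma integrable_coord_innov (n : ℕ) (m : Fin n) (k : Fin K) (j : Fin (I k)) :
    Integrable (fun ζ : Fin n → ∀ k : Fin K, Fin (I k) → ℝ => ζ m k j)
      (innovLaw K I n) := by
  have h1 : (innovLaw K I n).map (Function.eval m)
      = Measure.pi fun k : Fin K => stdGaussian (Fin (I k)) := by
    unfold innovLaw
    exact pi_map_eval _ m
  have h2 : (Measure.pi fun k : Fin K => stdGaussian (Fin (I k))).map (Function.eval k)
      = stdGaussian (Fin (I k)) := pi_map_eval _ k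
  have h3 : (stdGaussian (Fin (I k))).map (Function.eval j) = gaussianReal 0 1 := by
    unfold _root_.stdGaussian
    exact pi_map_eval _ j
  have hcomp : (innovLaw K I n).map
      (fun ζ : Fin n → ∀ k : Fin K, Fin (I k) → ℝ => ζ m k j) = gaussianReal 0 1 := by
    have e1 : (fun ζ : Fin n → ∀ k : Fin K, Fin (I k) → ℝ => ζ m k j)
        = (Function.eval j) ∘ ((Function.eval k) ∘
            (Function.eval m : (Fin n → ∀ k : Fin K, Fin (I k) → ℝ) → _)) := by
      funext ζ
      rfl
    rw [e1, ← Measure.map_map (measurable_pi_apply j)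
      ((measurable_pi_apply k).comp (measurable_pi_apply m)),
      ← Measure.map_map (measurable_pi_apply k) (measurable_pi_apply m), h1, h2, h3]
  have hmeas : Measurable (fun ζ : Fin n → ∀ k : Fin K, Fin (I k) → ℝ => ζ m k j) :=
    (measurable_pi_apply j).comp ((measurable_pi_apply k).comp (measurable_pi_apply m))
  have := (integrable_map_measure (f := fun ζ : Fin n → ∀ k : Fin K, Fin (I k) → ℝ => ζ m k j)
    (g := fun x : ℝ => x)
    (by rw [hcomp]; exact measurable_id.aestronglyMeasurable) hmeas.aemeasurable).mp
  exact this (by rw [hcomp]; exact integrable_id_gaussianReal)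

/-- The sum of absolute values of all coordinates. -/
def innovSumAbs {n : ℕ} (ζ : Fin n → ∀ k : Fin K, Fin (I k) → ℝ) : ℝ :=
  ∑ m, ∑ k, ∑ j, |ζ m k j|

lemma innovSumAbs_nonneg {n : ℕ} (ζ : Fin n → ∀ k : Fin K, Fin (I k) → ℝ) :
    0 ≤ innovSumAbs ζ :=
  Finset.sum_nonneg fun _ _ => Finset.sum_nonneg fun _ _ =>
    Finset.sum_nonneg fun _ _ => abs_nonneg _

lemma integrable_innovSumAbs (n : ℕ) :
    Integrable (innovSumAbs (K := K) (I := I) (n := n)) (innovLaw K I n) := by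
  unfold innovSumAbs
  exact integrable_finset_sum _ fun m _ =>
    integrable_finset_sum _ fun k _ =>
      integrable_finset_sum _ fun j _ => (integrable_coord_innov n m k j).abs

lemma norm_le_innovSumAbs {n : ℕ} (ζ : Fin n → ∀ k : Fin K, Fin (I k) → ℝ) :
    ‖ζ‖ ≤ innovSumAbs ζ := by
  rw [pi_norm_le_iff_of_nonneg (innovSumAbs_nonneg ζ)]
  intro m
  have h1 : ‖ζ m‖ ≤ ∑ k, ∑ j, |ζ m k j| := by
    rw [pi_norm_le_iff_of_nonneg (Finset.sum_nonneg fun _ _ =>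
      Finset.sum_nonneg fun _ _ => abs_nonneg _)]
    intro k
    have h2 : ‖ζ m k‖ ≤ ∑ j, |ζ m k j| := by
      rw [pi_norm_le_iff_of_nonneg (Finset.sum_nonneg fun _ _ => abs_nonneg _)]
      intro j
      rw [Real.norm_eq_abs]
      exact Finset.single_le_sum (f := fun j => |ζ m k j|)
        (fun _ _ => abs_nonneg _) (Finset.mem_univ j)
    exact h2.trans (Finset.single_le_sum (f := fun k => ∑ j, |ζ m k j|)
      (fun _ _ => Finset.sum_nonneg fun _ _ => abs_nonneg _) (Finset.mem_univ k))
  exact h1.trans (Finset.single_le_sum (f := fun m => ∑ k, ∑ j, |ζ m k j|)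
    (fun _ _ => Finset.sum_nonneg fun _ _ => Finset.sum_nonneg fun _ _ => abs_nonneg _)
    (Finset.mem_univ m))

variable (μv : GState K I)
variable (A : ∀ k l : Fin K, Matrix (Fin (I k)) (Fin (I l)) ℝ)
variable (R : ∀ k : Fin K, Matrix (Fin (I k)) (Fin (I k)) ℝ)
variable (σ : Equiv.Perm (Fin K))

lemma integrable_coord_gibbsIter (n : ℕ) (x : GState K I) (k : Fin K) (i : Fin (I k)) :
    Integrable (fun ζ : Fin n → ∀ k : Fin K, Fin (I k) → ℝ => gibbsIter μv A R σ n ζ x k i)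
      (innovLaw K I n) := by
  have hrep : (fun ζ : Fin n → ∀ k : Fin K, Fin (I k) → ℝ => gibbsIter μv A R σ n ζ x k i)
      = fun ζ => (iterLin A R σ n ζ) k i + (gibbsIter μv A R σ n 0 x) k i := by
    funext ζ
    rw [gibbsIter_affine μv A R σ n ζ x]
    rfl
  rw [hrep]
  refine Integrable.add ?_ (integrable_const _)
  set L : (Fin n → ∀ k : Fin K, Fin (I k) → ℝ) →ₗ[ℝ] ℝ :=
    (LinearMap.proj i).comp ((LinearMap.proj k).comp (iterLin A R σ n)) with hL
  have hLfun : (fun ζ : Fin n → ∀ k : Fin K, Fin (I k) → ℝ => (iterLin A R σ n ζ) k i)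
      = fun ζ => L ζ := rfl
  rw [hLfun]
  set Lc : (Fin n → ∀ k : Fin K, Fin (I k) → ℝ) →L[ℝ] ℝ :=
    { toLinearMap := L, cont := L.continuous_of_finiteDimensional } with hLc
  refine Integrable.mono ((integrable_innovSumAbs n).const_mul ‖Lc‖)
    Lc.continuous.aestronglyMeasurable (ae_of_all _ fun ζ => ?_)
  have h1 : ‖L ζ‖ ≤ ‖Lc‖ * ‖ζ‖ := Lc.le_opNorm ζ
  refine h1.trans ?_
  rw [Real.norm_eq_abs, abs_of_nonneg (mul_nonneg (norm_nonneg _) (innovSumAbs_nonneg ζ))]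
  exact mul_le_mul_of_nonneg_left (norm_le_innovSumAbs ζ) (norm_nonneg _)

end InnovAux

/-- Lemma: optimality of the composition of `W₂`-optimal couplings for
Gaussians.  For a Gaussian target `N(μ, Q⁻¹)`, the composed common-random-numbers coupling of
the blocked Gibbs sweep is, after any number `n ≥ 1` of iterations, a coupling of `Pⁿ(x,·)`
and `Pⁿ(y,·)` minimizing `∫‖u − v‖² dγ`, and the minimal value is `‖Bⁿ(x − y)‖²`. -/
theorem crn_composition_W2_optimal
    (K : ℕ) (I : Fin K → ℕ) (μv : GState K I)
    (Q : ∀ k l : Fin K, Matrix (Fin (I k)) (Fin (I l)) ℝ)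
    (hQsym : ∀ k l i j, Q k l i j = Q l k j i)
    (hQ : (Matrix.of fun p q : (k : Fin K) × Fin (I k) => Q p.1 q.1 p.2 q.2).PosDef)
    (hQkk : ∀ k, (Q k k).PosDef)
    (A : ∀ k l : Fin K, Matrix (Fin (I k)) (Fin (I l)) ℝ)
    (hAdiag : ∀ k, A k k = 0)
    (hAoff : ∀ k l, l ≠ k → A k l = -((Q k k)⁻¹ * Q k l))
    (R : ∀ k : Fin K, Matrix (Fin (I k)) (Fin (I k)) ℝ)
    (hR : ∀ k, R k = ((hQkk k).inv.posSemidef).sqrt)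
    (σ : Equiv.Perm (Fin K))
    (n : ℕ) (hn : 1 ≤ n) (x y : GState K I) :
    ((crnPairLaw μv A R σ n x y).map Prod.fst = nStepLaw μv A R σ n x
      ∧ (crnPairLaw μv A R σ n x y).map Prod.snd = nStepLaw μv A R σ n y)
    ∧ (∫⁻ p, ENNReal.ofReal (gNormSq (p.1 - p.2)) ∂(crnPairLaw μv A R σ n x y))
        = ENNReal.ofReal (gNormSq ((sweepLin μv A R σ)^[n] (x - y)))
    ∧ ∀ γ : Measure (GState K I × GState K I),
        γ.map Prod.fst = nStepLaw μv A R σ n x → γ.map Prod.snd = nStepLaw μv A R σ n y →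
        ENNReal.ofReal (gNormSq ((sweepLin μv A R σ)^[n] (x - y)))
          ≤ ∫⁻ p, ENNReal.ofReal (gNormSq (p.1 - p.2)) ∂γ := by
  classical
  have hx : Measurable fun ζ : Fin n → ∀ k : Fin K, Fin (I k) → ℝ =>
      gibbsIter μv A R σ n ζ x := measurable_gibbsIter μv A R σ n x
  have hy : Measurable fun ζ : Fin n → ∀ k : Fin K, Fin (I k) → ℝ =>
      gibbsIter μv A R σ n ζ y := measurable_gibbsIter μv A R σ n y
  have hpair : Measurable fun ζ : Fin n → ∀ k : Fin K, Fin (I k) → ℝ =>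
      (gibbsIter μv A R σ n ζ x, gibbsIter μv A R σ n ζ y) := hx.prodMk hy
  set m : GState K I := (sweepLin μv A R σ)^[n] (x - y) with hm
  have hgmeas : ∀ (k : Fin K) (i : Fin (I k)),
      Measurable fun v : GState K I => v k i := fun k i => (measurable_pi_apply k).eval
  have hcoordmeas : ∀ (k : Fin K) (i : Fin (I k)),
      Measurable fun p : GState K I × GState K I => p.1 k i - p.2 k i := fun k i =>
    ((hgmeas k i).comp measurable_fst).sub ((hgmeas k i).comp measurable_snd)
  refine ⟨⟨?_, ?_⟩, ?_, ?_⟩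
  · rw [crnPairLaw, Measure.map_map measurable_fst hpair]
    rfl
  · rw [crnPairLaw, Measure.map_map measurable_snd hpair]
    rfl
  · have hint : Measurable fun p : GState K I × GState K I =>
        ENNReal.ofReal (gNormSq (p.1 - p.2)) :=
      ENNReal.measurable_ofReal.comp (measurable_gNormSq.comp (measurable_fst.sub measurable_snd))
    rw [crnPairLaw, lintegral_map hint hpair]
    have hdiff : ∀ ζ : Fin n → ∀ k : Fin K, Fin (I k) → ℝ,
        gibbsIter μv A R σ n ζ x - gibbsIter μv A R σ n ζ y = m :=
      fun ζ => gibbsIter_pair_diff μv A R σ n ζ x y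
    simp only [hdiff]
    rw [lintegral_const, measure_univ, mul_one]
  · intro γ hγ1 hγ2
    by_cases hfin : (∫⁻ p, ENNReal.ofReal (gNormSq (p.1 - p.2)) ∂γ) = ⊤
    · rw [hfin]; exact le_top
    have hprob_nstep : IsProbabilityMeasure (nStepLaw μv A R σ n x) := by
      rw [nStepLaw]; exact Measure.isProbabilityMeasure_map hx.aemeasurable
    have hγP : IsProbabilityMeasure γ := by
      constructor
      have h1 : (γ.map Prod.fst) Set.univ = 1 := by
        rw [hγ1]; exact hprob_nstep.measure_univ
      rwa [Measure.map_apply measurable_fst MeasurableSet.univ, Set.preimage_univ] at h1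
    have hexp : ∀ p : GState K I × GState K I,
        ENNReal.ofReal (gNormSq (p.1 - p.2))
          = ∑ k, ∑ i, ENNReal.ofReal ((p.1 k i - p.2 k i) ^ 2) := by
      intro p
      rw [gNormSq, ENNReal.ofReal_sum_of_nonneg
        (fun k _ => Finset.sum_nonneg fun i _ => sq_nonneg _)]
      exact Finset.sum_congr rfl fun k _ =>
        ENNReal.ofReal_sum_of_nonneg (fun i _ => sq_nonneg _)
    have hsqmeas : ∀ (k : Fin K) (i : Fin (I k)),
        Measurable fun p : GState K I × GState K I =>
          ENNReal.ofReal ((p.1 k i - p.2 k i) ^ 2) := fun k i =>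
      ((hcoordmeas k i).pow_const 2).ennreal_ofReal
    have hlint : (∫⁻ p, ENNReal.ofReal (gNormSq (p.1 - p.2)) ∂γ)
        = ∑ k, ∑ i, ∫⁻ p, ENNReal.ofReal ((p.1 k i - p.2 k i) ^ 2) ∂γ := by
      simp only [hexp]
      rw [lintegral_finset_sum _ fun k _ =>
        Finset.measurable_sum _ fun i _ => hsqmeas k i]
      exact Finset.sum_congr rfl fun k _ => lintegral_finset_sum _ fun i _ => hsqmeas k i
    have hterm_fin : ∀ (k : Fin K) (i : Fin (I k)),
        (∫⁻ p, ENNReal.ofReal ((p.1 k i - p.2 k i) ^ 2) ∂γ) ≠ ⊤ := by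
      intro k i htop
      exact hfin (by
        rw [hlint]
        exact ENNReal.sum_eq_top.mpr ⟨k, Finset.mem_univ k,
          ENNReal.sum_eq_top.mpr ⟨i, Finset.mem_univ i, htop⟩⟩)
    have hint_sq : ∀ (k : Fin K) (i : Fin (I k)),
        Integrable (fun p : GState K I × GState K I => (p.1 k i - p.2 k i) ^ 2) γ := by
      intro k i
      refine ⟨((hcoordmeas k i).pow_const 2).aestronglyMeasurable, ?_⟩
      rw [hasFiniteIntegral_iff_norm]
      have he : ∀ p : GState K I × GState K I,
          ENNReal.ofReal ‖(p.1 k i - p.2 k i) ^ 2‖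
            = ENNReal.ofReal ((p.1 k i - p.2 k i) ^ 2) := by
        intro p
        rw [Real.norm_eq_abs, abs_of_nonneg (sq_nonneg _)]
      simp only [he]
      exact lt_top_iff_ne_top.mpr (hterm_fin k i)
    have hmem2 : ∀ (k : Fin K) (i : Fin (I k)),
        MemLp (fun p : GState K I × GState K I => p.1 k i - p.2 k i) 2 γ := by
      intro k i
      rw [memLp_two_iff_integrable_sq (hcoordmeas k i).aestronglyMeasurable]
      exact hint_sq k i
    have hint1 : ∀ (k : Fin K) (i : Fin (I k)),
        Integrable (fun p : GState K I × GState K I => p.1 k i) γ := by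
      intro k i
      have h1 : Integrable (fun v : GState K I => v k i) (nStepLaw μv A R σ n x) := by
        rw [nStepLaw, integrable_map_measure (hgmeas k i).aestronglyMeasurable hx.aemeasurable]
        exact integrable_coord_gibbsIter μv A R σ n x k i
      rw [← hγ1, integrable_map_measure (hgmeas k i).aestronglyMeasurable
        measurable_fst.aemeasurable] at h1
      exact h1
    have hint2 : ∀ (k : Fin K) (i : Fin (I k)),
        Integrable (fun p : GState K I × GState K I => p.2 k i) γ := by
      intro k i
      have h1 : Integrable (fun v : GState K I => v k i) (nStepLaw μv A R σ n y) := by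
        rw [nStepLaw, integrable_map_measure (hgmeas k i).aestronglyMeasurable hy.aemeasurable]
        exact integrable_coord_gibbsIter μv A R σ n y k i
      rw [← hγ2, integrable_map_measure (hgmeas k i).aestronglyMeasurable
        measurable_snd.aemeasurable] at h1
      exact h1
    have hmean : ∀ (k : Fin K) (i : Fin (I k)),
        ∫ p, (p.1 k i - p.2 k i) ∂γ = m k i := by
      intro k i
      rw [integral_sub (hint1 k i) (hint2 k i)]
      have e1 : ∫ p, p.1 k i ∂γ
          = ∫ ζ, gibbsIter μv A R σ n ζ x k i ∂(innovLaw K I n) := by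
        have h0 : ∫ p, p.1 k i ∂γ = ∫ v, v k i ∂(γ.map Prod.fst) :=
          (integral_map measurable_fst.aemeasurable
            (hgmeas k i).aestronglyMeasurable).symm
        rw [h0, hγ1, nStepLaw, integral_map hx.aemeasurable
          (hgmeas k i).aestronglyMeasurable]
      have e2 : ∫ p, p.2 k i ∂γ
          = ∫ ζ, gibbsIter μv A R σ n ζ y k i ∂(innovLaw K I n) := by
        have h0 : ∫ p, p.2 k i ∂γ = ∫ v, v k i ∂(γ.map Prod.snd) :=
          (integral_map measurable_snd.aemeasurable
            (hgmeas k i).aestronglyMeasurable).symm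
        rw [h0, hγ2, nStepLaw, integral_map hy.aemeasurable
          (hgmeas k i).aestronglyMeasurable]
      rw [e1, e2, ← integral_sub (integrable_coord_gibbsIter μv A R σ n x k i)
        (integrable_coord_gibbsIter μv A R σ n y k i)]
      have e3 : ∀ ζ : Fin n → ∀ k : Fin K, Fin (I k) → ℝ,
          gibbsIter μv A R σ n ζ x k i - gibbsIter μv A R σ n ζ y k i = m k i := by
        intro ζ
        have hd := gibbsIter_pair_diff μv A R σ n ζ x y
        calc gibbsIter μv A R σ n ζ x k i - gibbsIter μv A R σ n ζ y k i
            = (gibbsIter μv A R σ n ζ x - gibbsIter μv A R σ n ζ y) k i := rfl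
          _ = m k i := by rw [hd]
      simp only [e3]
      rw [integral_const]
      simp
    have hsq : ∀ (k : Fin K) (i : Fin (I k)),
        (m k i) ^ 2 ≤ ∫ p, (p.1 k i - p.2 k i) ^ 2 ∂γ := by
      intro k i
      have hvar := variance_nonneg (fun p : GState K I × GState K I => p.1 k i - p.2 k i) γ
      rw [variance_eq_sub (hmem2 k i)] at hvar
      have hpow : ((fun p : GState K I × GState K I => p.1 k i - p.2 k i) ^ 2)
          = fun p : GState K I × GState K I => (p.1 k i - p.2 k i) ^ 2 := rfl
      rw [hpow, hmean k i] at hvar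
      linarith [hvar]
    rw [hlint]
    have hfinal : ENNReal.ofReal (gNormSq m)
        ≤ ∑ k, ∑ i, ENNReal.ofReal (∫ p, (p.1 k i - p.2 k i) ^ 2 ∂γ) := by
      rw [gNormSq, ENNReal.ofReal_sum_of_nonneg
        (fun k _ => Finset.sum_nonneg fun i _ => sq_nonneg _)]
      refine Finset.sum_le_sum fun k _ => ?_
      rw [ENNReal.ofReal_sum_of_nonneg (fun i _ => sq_nonneg _)]
      exact Finset.sum_le_sum fun i _ => ENNReal.ofReal_le_ofReal (hsq k i)
    refine hfinal.trans ?_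
    refine Finset.sum_le_sum fun k _ => Finset.sum_le_sum fun i _ => le_of_eq ?_
    exact ofReal_integral_eq_lintegral_ofReal (hint_sq k i)
      (ae_of_all _ fun p => sq_nonneg _)

end
end

section
/- For product probability measures p = ⊗_{i=1}^n p_i and q = ⊗_{i=1}^n q_i, the maximal meeting probability Pr_max(p, q) := 1 − ‖p − q‖_TV satisfies min_{1≤i≤n} Pr_max(p_i, q_i) ≥ Pr_max(p, q) ≥ ∏_{i=1}^n Pr_max(p_i, q_i). -/
open MeasureTheory ProbabilityTheory Filter
open scoped ENNReal NNReal Classical BigOperators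

noncomputable section

/-- Total variation distance between two measures. -/
def tvDist {X : Type*} [MeasurableSpace X] (p q : Measure X) : ℝ :=
  ⨆ s : {s : Set X // MeasurableSet s}, |(p s.1).toReal - (q s.1).toReal|

/-- Maximal meeting probability `Pr_max(p, q) = 1 − ‖p − q‖_TV`. -/
def prMax {X : Type*} [MeasurableSpace X] (p q : Measure X) : ℝ := 1 - tvDist p q

open Set

section helpers
variable {X : Type*} [MeasurableSpace X]

lemma toReal_le_one' (μ : Measure X) [IsProbabilityMeasure μ] (s : Set X) :
    (μ s).toReal ≤ 1 := by
  simpa using ENNReal.toReal_mono ENNReal.one_ne_top (prob_le_one (μ := μ) (s := s))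

lemma abs_diff_le_one (p q : Measure X) [IsProbabilityMeasure p] [IsProbabilityMeasure q]
    (s : Set X) : |(p s).toReal - (q s).toReal| ≤ 1 := by
  have h1 := toReal_le_one' p s
  have h2 := toReal_le_one' q s
  have h3 : 0 ≤ (p s).toReal := ENNReal.toReal_nonneg
  have h4 : 0 ≤ (q s).toReal := ENNReal.toReal_nonneg
  rw [abs_le]; constructor <;> linarith

lemma tvDist_le (p q : Measure X) {c : ℝ}
    (h : ∀ s : Set X, MeasurableSet s → |(p s).toReal - (q s).toReal| ≤ c) :
    tvDist p q ≤ c := by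
  have : Nonempty {s : Set X // MeasurableSet s} := ⟨⟨∅, MeasurableSet.empty⟩⟩
  exact ciSup_le fun s => h s.1 s.2

lemma le_tvDist (p q : Measure X) [IsProbabilityMeasure p] [IsProbabilityMeasure q]
    {s : Set X} (hs : MeasurableSet s) :
    |(p s).toReal - (q s).toReal| ≤ tvDist p q := by
  refine le_ciSup (f := fun s : {s : Set X // MeasurableSet s} =>
    |(p s.1).toReal - (q s.1).toReal|) ⟨1, ?_⟩ ⟨s, hs⟩
  rintro x ⟨t, rfl⟩
  exact abs_diff_le_one p q t.1

lemma tvDist_le_one (p q : Measure X) [IsProbabilityMeasure p] [IsProbabilityMeasure q] :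
    tvDist p q ≤ 1 := tvDist_le p q fun s _ => abs_diff_le_one p q s

lemma prMax_nonneg (p q : Measure X) [IsProbabilityMeasure p] [IsProbabilityMeasure q] :
    0 ≤ prMax p q := by
  have := tvDist_le_one p q; rw [prMax]; linarith

lemma prMax_ge_of_le (p q : Measure X) [IsProbabilityMeasure p] [IsProbabilityMeasure q]
    (m : Measure X) [IsFiniteMeasure m] (hmp : m ≤ p) (hmq : m ≤ q) :
    (m Set.univ).toReal ≤ prMax p q := by
  have htv : tvDist p q ≤ 1 - (m Set.univ).toReal := by
    apply tvDist_le
    intro s hs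
    have hps : (p sᶜ).toReal = 1 - (p s).toReal := by
      rw [prob_compl_eq_one_sub hs, ENNReal.toReal_sub_of_le (prob_le_one) ENNReal.one_ne_top]
      simp
    have hqs : (q sᶜ).toReal = 1 - (q s).toReal := by
      rw [prob_compl_eq_one_sub hs, ENNReal.toReal_sub_of_le (prob_le_one) ENNReal.one_ne_top]
      simp
    have hm : (m s).toReal + (m sᶜ).toReal = (m Set.univ).toReal := by
      rw [← ENNReal.toReal_add (measure_ne_top m s) (measure_ne_top m sᶜ),
        measure_add_measure_compl hs]
    have h1 : (m s).toReal ≤ (p s).toReal :=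
      ENNReal.toReal_mono (measure_ne_top p s) (hmp s)
    have h2 : (m s).toReal ≤ (q s).toReal :=
      ENNReal.toReal_mono (measure_ne_top q s) (hmq s)
    have h3 : (m sᶜ).toReal ≤ (p sᶜ).toReal :=
      ENNReal.toReal_mono (measure_ne_top p sᶜ) (hmp sᶜ)
    have h4 : (m sᶜ).toReal ≤ (q sᶜ).toReal :=
      ENNReal.toReal_mono (measure_ne_top q sᶜ) (hmq sᶜ)
    rw [abs_le]; constructor <;> linarith
  rw [prMax]; linarith

lemma exists_opt (p q : Measure X) [IsProbabilityMeasure p] [IsProbabilityMeasure q] :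
    ∃ m : Measure X, IsFiniteMeasure m ∧ m ≤ p ∧ m ≤ q ∧ prMax p q ≤ (m Set.univ).toReal := by
  obtain ⟨s, hs, h1, h2⟩ := hahn_decomposition (μ := p) (ν := q)
  refine ⟨q.restrict s + p.restrict sᶜ, inferInstance, ?_, ?_, ?_⟩
  · rw [Measure.le_iff]
    intro t ht
    rw [Measure.add_apply, Measure.restrict_apply ht, Measure.restrict_apply ht]
    calc q (t ∩ s) + p (t ∩ sᶜ) ≤ p (t ∩ s) + p (t ∩ sᶜ) :=
          add_le_add_left (h1 _ (ht.inter hs) inter_subset_right) _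
      _ = p t := by rw [← Set.diff_eq, measure_inter_add_diff t hs]
  · rw [Measure.le_iff]
    intro t ht
    rw [Measure.add_apply, Measure.restrict_apply ht, Measure.restrict_apply ht]
    calc q (t ∩ s) + p (t ∩ sᶜ) ≤ q (t ∩ s) + q (t ∩ sᶜ) :=
          add_le_add_right (h2 _ (ht.inter hs.compl) inter_subset_right) _
      _ = q t := by rw [← Set.diff_eq, measure_inter_add_diff t hs]
  · have hmu : ((q.restrict s + p.restrict sᶜ) Set.univ).toReal
        = (q s).toReal + (p sᶜ).toReal := by
      rw [Measure.add_apply, Measure.restrict_apply_univ, Measure.restrict_apply_univ,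
        ENNReal.toReal_add (measure_ne_top q s) (measure_ne_top p sᶜ)]
    have hps : (p sᶜ).toReal = 1 - (p s).toReal := by
      rw [prob_compl_eq_one_sub hs, ENNReal.toReal_sub_of_le (prob_le_one) ENNReal.one_ne_top]
      simp
    have htv : (p s).toReal - (q s).toReal ≤ tvDist p q :=
      (le_abs_self _).trans (le_tvDist p q hs)
    rw [prMax, hmu]; linarith

end helpers

lemma pi_mono {n : ℕ} {𝒳 : Fin n → Type*} [∀ i, MeasurableSpace (𝒳 i)]
    (m p : ∀ i, Measure (𝒳 i)) (h : ∀ i, m i ≤ p i) :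
    Measure.pi m ≤ Measure.pi p := by
  rw [Measure.le_iff]
  intro t ht
  rw [Measure.pi_def, Measure.pi_def, toMeasure_apply _ _ ht, toMeasure_apply _ _ ht]
  refine (OuterMeasure.le_pi.mpr fun s _ => ?_) t
  exact (OuterMeasure.pi_pi_le _ s).trans (Finset.prod_le_prod' fun i _ => h i _)

/-- Lemma: maximal meeting probabilities of product measures.
For product probability measures `p = ⊗ pᵢ` and `q = ⊗ qᵢ`,
`min_i Pr_max(pᵢ, qᵢ) ≥ Pr_max(p, q) ≥ ∏ i, Pr_max(pᵢ, qᵢ)`. -/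
theorem prMax_product_bounds
    (n : ℕ) (𝒳 : Fin n → Type*) [∀ i, MeasurableSpace (𝒳 i)]
    (p q : ∀ i : Fin n, Measure (𝒳 i))
    [∀ i, IsProbabilityMeasure (p i)] [∀ i, IsProbabilityMeasure (q i)] :
    (∀ i, prMax (Measure.pi p) (Measure.pi q) ≤ prMax (p i) (q i))
    ∧ (∏ i, prMax (p i) (q i)) ≤ prMax (Measure.pi p) (Measure.pi q) := by
  constructor
  · intro i
    rw [prMax, prMax]
    have : tvDist (p i) (q i) ≤ tvDist (Measure.pi p) (Measure.pi q) := by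
      apply tvDist_le
      intro s hs
      have hA : MeasurableSet (Function.eval i ⁻¹' s) := measurable_pi_apply i hs
      have hp : Measure.pi p (Function.eval i ⁻¹' s) = p i s := by
        rw [Set.eval_preimage, Measure.pi_pi]
        rw [Finset.prod_eq_single i]
        · simp
        · intro j _ hj; simp [Function.update_of_ne hj]
        · simp
      have hq : Measure.pi q (Function.eval i ⁻¹' s) = q i s := by
        rw [Set.eval_preimage, Measure.pi_pi]
        rw [Finset.prod_eq_single i]
        · simp
        · intro j _ hj; simp [Function.update_of_ne hj]
        · simp
      have := le_tvDist (Measure.pi p) (Measure.pi q) hA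
      rwa [hp, hq] at this
    linarith
  · choose m hfin hmp hmq hpr using fun i => exists_opt (p i) (q i)
    haveI : ∀ i, IsFiniteMeasure (m i) := hfin
    haveI : ∀ i, SigmaFinite (m i) := fun i => inferInstance
    have hle_p : Measure.pi m ≤ Measure.pi p := pi_mono m p hmp
    have hle_q : Measure.pi m ≤ Measure.pi q := pi_mono m q hmq
    haveI : IsFiniteMeasure (Measure.pi m) :=
      isFiniteMeasure_of_le (Measure.pi p) hle_p
    calc (∏ i, prMax (p i) (q i)) ≤ ∏ i, ((m i) Set.univ).toReal :=
          Finset.prod_le_prod (fun i _ => prMax_nonneg (p i) (q i)) (fun i _ => hpr i)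
      _ = (Measure.pi m Set.univ).toReal := by
          rw [Measure.pi_univ, ENNReal.toReal_prod]
      _ ≤ prMax (Measure.pi p) (Measure.pi q) :=
          prMax_ge_of_le _ _ (Measure.pi m) hle_p hle_q

end
end

section
/- For shifted product Gaussians whose standardized mean differences scale as c_{i,d}·d^{−α} with α > 0, the product of the coordinate-wise maximal meeting probabilities satisfies ln( ∏_{i=1}^d Pr_max(p_i^{(d)}, q_i^{(d)}) ) / ( −d^{1−α}·c̃_d ) → 1 as d → ∞, where c̃_d := (Σ_{i=1}^d |c_{i,d}|) / (d·√(2π)); equivalently, ∏_{i=1}^d Pr_max(p_i^{(d)}, q_i^{(d)}) = exp( −d^{1−α}·c̃_d·(1 + o(1)) ). -/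
open MeasureTheory ProbabilityTheory Filter Topology
open scoped ENNReal NNReal Classical BigOperators

noncomputable section

open Real Set

lemma gauss_toReal (μ : ℝ) {v : ℝ≥0} (hv : v ≠ 0) (s : Set ℝ) :
    (gaussianReal μ v s).toReal = ∫ x in s, gaussianPDFReal μ v x := by
  rw [gaussianReal_apply_eq_integral _ hv, ENNReal.toReal_ofReal
    (integral_nonneg (fun x => gaussianPDFReal_nonneg _ _ _))]

lemma pdf_le_pdf {μ ν : ℝ} {v : ℝ≥0} (hv : v ≠ 0) (hlt : ν ≤ μ) {x : ℝ} (hx : (μ+ν)/2 ≤ x) :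
    gaussianPDFReal ν v x ≤ gaussianPDFReal μ v x := by
  have hvpos : (0:ℝ) < v := by positivity
  unfold gaussianPDFReal
  have h1 : (x - μ)^2 ≤ (x - ν)^2 := by nlinarith
  have h2 : -(x - ν)^2/(2*v) ≤ -(x - μ)^2/(2*v) := by
    apply div_le_div_of_nonneg_right ?_ (by positivity) |>.trans_eq rfl
    linarith
  exact mul_le_mul_of_nonneg_left (exp_le_exp.2 h2) (by positivity)

lemma pdf_le_pdf' {μ ν : ℝ} {v : ℝ≥0} (hv : v ≠ 0) (hlt : ν ≤ μ) {x : ℝ} (hx : x ≤ (μ+ν)/2) :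
    gaussianPDFReal μ v x ≤ gaussianPDFReal ν v x := by
  have hvpos : (0:ℝ) < v := by positivity
  unfold gaussianPDFReal
  have h1 : (x - ν)^2 ≤ (x - μ)^2 := by nlinarith
  have h2 : -(x - μ)^2/(2*v) ≤ -(x - ν)^2/(2*v) := by
    apply div_le_div_of_nonneg_right ?_ (by positivity) |>.trans_eq rfl
    linarith
  exact mul_le_mul_of_nonneg_left (exp_le_exp.2 h2) (by positivity)

lemma tvDist_gaussian_eq {μ ν : ℝ} {v : ℝ≥0} (hv : v ≠ 0) (hlt : ν < μ) :
    tvDist (gaussianReal μ v) (gaussianReal ν v)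
      = ∫ x in Set.Ico ((μ+ν)/2) ((μ+ν)/2 + (μ-ν)), gaussianPDFReal μ v x := by
  set h : ℝ := (μ+ν)/2 with hh
  set δ : ℝ := μ - ν with hδ
  have hδpos : 0 < δ := by simp only [hδ]; linarith
  have hμ : μ = ν + δ := by rw [hδ]; ring
  -- translation identity
  have L1 : gaussianReal ν v (Ici h) = gaussianReal μ v (Ici (h+δ)) := by
    conv_rhs => rw [hμ, ← gaussianReal_map_add_const δ]
    rw [Measure.map_apply (measurable_add_const δ) measurableSet_Ici]
    congr 1
    ext x
    simp only [mem_preimage, mem_Ici, id]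
    constructor <;> intro <;> linarith
  -- splitting identity
  have L2 : (gaussianReal μ v (Ici h)).toReal
      = (gaussianReal μ v (Ico h (h+δ))).toReal + (gaussianReal μ v (Ici (h+δ))).toReal := by
    rw [← ENNReal.toReal_add (measure_ne_top _ _) (measure_ne_top _ _),
      ← measure_union ((Set.Iio_disjoint_Ici le_rfl).mono_left Set.Ico_subset_Iio_self)
        measurableSet_Ici, Set.Ico_union_Ici_eq_Ici (by linarith)]
  set T : ℝ := (gaussianReal μ v (Ico h (h+δ))).toReal with hT
  have keyIci : (gaussianReal μ v (Ici h)).toReal - (gaussianReal ν v (Ici h)).toReal = T := by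
    rw [L1]; linarith [L2]
  have fint : Integrable (gaussianPDFReal μ v) := integrable_gaussianPDFReal μ v
  have gint : Integrable (gaussianPDFReal ν v) := integrable_gaussianPDFReal ν v
  have diff_int : ∀ s : Set ℝ, MeasurableSet s →
      (gaussianReal μ v s).toReal - (gaussianReal ν v s).toReal
        = ∫ x in s, (gaussianPDFReal μ v x - gaussianPDFReal ν v x) := by
    intro s hs
    rw [gauss_toReal _ hv, gauss_toReal _ hv, ← integral_sub fint.restrict gint.restrict]
  have upper : ∀ s : Set ℝ, MeasurableSet s →
      |(gaussianReal μ v s).toReal - (gaussianReal ν v s).toReal| ≤ T := by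
    intro s hs
    set F : ℝ → ℝ := fun x => max (gaussianPDFReal μ v x - gaussianPDFReal ν v x) 0 with hF
    have Fint : Integrable F := (fint.sub gint).pos_part
    have Fnn : 0 ≤ F := fun x => le_max_right _ _
    have key : ∀ t : Set ℝ, MeasurableSet t →
        ∫ x in t, (gaussianPDFReal μ v x - gaussianPDFReal ν v x) ≤ T := by
      intro t ht
      have h1 : ∫ x in t, (gaussianPDFReal μ v x - gaussianPDFReal ν v x) ≤ ∫ x in t, F x :=
        setIntegral_mono ((fint.sub gint).restrict) Fint.restrict (fun x => le_max_left _ _)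
      have h2 : ∫ x in t, F x ≤ ∫ x, F x :=
        setIntegral_le_integral Fint (ae_of_all _ Fnn)
      have h3 : ∫ x, F x = (∫ x in Iio h, F x) + ∫ x in Ici h, F x := by
        rw [← integral_add_compl measurableSet_Iio Fint, compl_Iio]
      have h4 : ∫ x in Iio h, F x = 0 := by
        rw [setIntegral_eq_zero_of_forall_eq_zero]
        intro x hx
        simp only [hF, max_eq_right_iff, sub_nonpos]
        exact pdf_le_pdf' hv hlt.le (le_of_lt hx)
      have h5 : ∫ x in Ici h, F x
          = ∫ x in Ici h, (gaussianPDFReal μ v x - gaussianPDFReal ν v x) := by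
        apply setIntegral_congr_fun measurableSet_Ici
        intro x hx
        simp only [hF]
        exact max_eq_left (sub_nonneg.2 (pdf_le_pdf hv hlt.le hx))
      have h6 : ∫ x in Ici h, (gaussianPDFReal μ v x - gaussianPDFReal ν v x) = T := by
        rw [← diff_int _ measurableSet_Ici, keyIci]
      linarith
    rw [abs_le]
    refine ⟨?_, ?_⟩
    · have hps : (gaussianReal μ v s).toReal + (gaussianReal μ v sᶜ).toReal = 1 := by
        rw [← ENNReal.toReal_add (measure_ne_top _ _) (measure_ne_top _ _),
          measure_add_measure_compl hs]
        simp
      have hqs : (gaussianReal ν v s).toReal + (gaussianReal ν v sᶜ).toReal = 1 := by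
        rw [← ENNReal.toReal_add (measure_ne_top _ _) (measure_ne_top _ _),
          measure_add_measure_compl hs]
        simp
      have h8 : (gaussianReal μ v sᶜ).toReal - (gaussianReal ν v sᶜ).toReal ≤ T := by
        rw [diff_int _ hs.compl]; exact key _ hs.compl
      linarith
    · rw [diff_int _ hs]; exact key s hs
  have hTnn : 0 ≤ T := ENNReal.toReal_nonneg
  have hmain : tvDist (gaussianReal μ v) (gaussianReal ν v) = T := by
    apply le_antisymm
    · exact ciSup_le fun s => upper s.1 s.2
    · have hbdd : BddAbove (Set.range fun s : {s : Set ℝ // MeasurableSet s} =>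
          |(gaussianReal μ v s.1).toReal - (gaussianReal ν v s.1).toReal|) := by
        refine ⟨T, ?_⟩
        rintro x ⟨⟨s, hs⟩, rfl⟩
        exact upper s hs
      have := le_ciSup hbdd (⟨Ici h, measurableSet_Ici⟩ : {s : Set ℝ // MeasurableSet s})
      refine le_trans (le_of_eq ?_) this
      rw [keyIci, abs_of_nonneg hTnn]
  rw [hmain, hT, gauss_toReal _ hv]
lemma tvDist_gaussian_bounds {μ ν σε : ℝ} (hσ : 0 < σε) {r : ℝ} (hr : 0 < r)
    (hδ : μ - ν = r * σε) :
    r / Real.sqrt (2*π) * rexp (-(r^2/8))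
        ≤ tvDist (gaussianReal μ ((σε^2).toNNReal)) (gaussianReal ν ((σε^2).toNNReal))
    ∧ tvDist (gaussianReal μ ((σε^2).toNNReal)) (gaussianReal ν ((σε^2).toNNReal))
        ≤ r / Real.sqrt (2*π) := by
  set v : ℝ≥0 := (σε^2).toNNReal with hv'
  have hvr : (v : ℝ) = σε^2 := Real.coe_toNNReal _ (sq_nonneg σε)
  have hv : v ≠ 0 := by
    intro hcontra
    rw [hcontra] at hvr
    simp at hvr
    nlinarith
  have hδpos : 0 < μ - ν := by rw [hδ]; positivity
  have hlt : ν < μ := by linarith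
  rw [tvDist_gaussian_eq hv hlt]
  set h : ℝ := (μ+ν)/2 with hhh
  set δ : ℝ := μ - ν with hhδ
  set C : ℝ := (Real.sqrt (2*π*(v:ℝ)))⁻¹ with hC
  have hCeq : C = (Real.sqrt (2*π) * σε)⁻¹ := by
    rw [hC, hvr, Real.sqrt_mul (by positivity) (σε^2), Real.sqrt_sq hσ.le]
  have hCpos : 0 < C := by
    rw [hCeq]; positivity
  have fint : IntegrableOn (gaussianPDFReal μ v) (Ico h (h+δ)) :=
    (integrable_gaussianPDFReal μ v).integrableOn
  have hvol : (volume (Ico h (h+δ))).toReal = δ := by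
    rw [Real.volume_Ico, ENNReal.toReal_ofReal (by linarith)]
    ring
  have hμh : μ = h + δ/2 := by rw [hhh, hhδ]; ring
  clear_value h δ
  constructor
  · -- lower bound
    have hpt : ∀ x ∈ Ico h (h+δ), C * rexp (-(r^2/8)) ≤ gaussianPDFReal μ v x := by
      intro x hx
      unfold gaussianPDFReal
      rw [← hC]
      apply mul_le_mul_of_nonneg_left _ hCpos.le
      apply exp_le_exp.2
      simp only [mem_Ico] at hx
      have ha : -(δ/2) ≤ x - μ := by nlinarith [hx.1, hμh]
      have hb : x - μ ≤ δ/2 := by nlinarith [hx.2, hμh]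
      have h1 : (x - μ)^2 ≤ (r*σε)^2/4 := by
        have := sq_le_sq' ha hb
        calc (x - μ)^2 ≤ (δ/2)^2 := this
          _ = (r*σε)^2/4 := by rw [hδ]; ring
      rw [hvr, neg_div]
      have h2 : (x - μ)^2/(2*σε^2) ≤ r^2/8 := by
        rw [div_le_div_iff₀ (by positivity) (by norm_num)]
        nlinarith
      linarith
    calc r / Real.sqrt (2*π) * rexp (-(r^2/8))
        = δ * (C * rexp (-(r^2/8))) := by
          rw [hCeq, hδ]
          field_simp
      _ = ∫ _x in Ico h (h+δ), C * rexp (-(r^2/8)) := by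
          rw [setIntegral_const, measureReal_def, hvol, smul_eq_mul]
      _ ≤ ∫ x in Ico h (h+δ), gaussianPDFReal μ v x := by
          apply setIntegral_mono_on (integrableOn_const ?_) fint measurableSet_Ico hpt
          rw [Real.volume_Ico]
          exact ENNReal.ofReal_ne_top
  · -- upper bound
    have hpt : ∀ x ∈ Ico h (h+δ), gaussianPDFReal μ v x ≤ C := by
      intro x _
      unfold gaussianPDFReal
      rw [← hC]
      calc C * rexp (-(x - μ)^2/(2*(v:ℝ))) ≤ C * 1 := by
            apply mul_le_mul_of_nonneg_left _ hCpos.le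
            rw [exp_le_one_iff]
            apply div_nonpos_of_nonpos_of_nonneg
            · simp [sq_nonneg]
            · rw [hvr]; positivity
        _ = C := mul_one C
    calc ∫ x in Ico h (h+δ), gaussianPDFReal μ v x
        ≤ ∫ _x in Ico h (h+δ), C := by
          apply setIntegral_mono_on fint (integrableOn_const ?_) measurableSet_Ico hpt
          rw [Real.volume_Ico]
          exact ENNReal.ofReal_ne_top
      _ = δ * C := by rw [setIntegral_const, measureReal_def, hvol, smul_eq_mul]
      _ = r / Real.sqrt (2*π) := by
          rw [hCeq, hδ]
          field_simp
lemma tvDist_comm {X : Type*} [MeasurableSpace X] (p q : Measure X) :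
    tvDist p q = tvDist q p := by
  unfold tvDist
  congr 1
  ext s
  rw [abs_sub_comm]

lemma tvDist_gaussian_bounds_abs {μ ν σε : ℝ} (hσ : 0 < σε) {r : ℝ} (hr : 0 < r)
    (hδ : |μ - ν| = r * σε) :
    r / Real.sqrt (2*π) * rexp (-(r^2/8))
        ≤ tvDist (gaussianReal μ ((σε^2).toNNReal)) (gaussianReal ν ((σε^2).toNNReal))
    ∧ tvDist (gaussianReal μ ((σε^2).toNNReal)) (gaussianReal ν ((σε^2).toNNReal))
        ≤ r / Real.sqrt (2*π) := by
  rcases abs_cases (μ - ν) with ⟨he, _⟩ | ⟨he, _⟩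
  · exact tvDist_gaussian_bounds hσ hr (he ▸ hδ)
  · rw [tvDist_comm]
    exact tvDist_gaussian_bounds hσ hr (by linarith [hδ, he])

/-- Lemma: product of coordinate-wise maximal meeting probabilities for
shifted Gaussians.  With `p_i^{(d)} = N(μ_{i,d}, σ_{i,d}²)`, `q_i^{(d)} = N(ν_{i,d}, σ_{i,d}²)`
and `(μ_{i,d} − ν_{i,d})/σ_{i,d} = c_{i,d}·d^{−α}`, `α > 0`, one has
`ln(∏ᵢ Pr_max(p_i^{(d)}, q_i^{(d)})) / (−d^{1−α}·c̃_d) → 1` as `d → ∞`, where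
`c̃_d = (Σᵢ |c_{i,d}|)/(d·√(2π))`. -/
theorem log_product_prMax_gaussians_asymptotics
    (μ ν σ c : (d : ℕ) → Fin d → ℝ) (α : ℝ) (hα : 0 < α)
    (hσ : ∀ d i, 0 < σ d i)
    (hc : ∀ d i, (μ d i - ν d i) / σ d i = c d i * (d : ℝ) ^ (-α))
    (m M : ℝ) (hm : 0 < m) (hbd : ∀ d i, m ≤ |c d i| ∧ |c d i| ≤ M) :
    Tendsto (fun d : ℕ =>
        Real.log (∏ i : Fin d,
            prMax (gaussianReal (μ d i) ((σ d i ^ 2).toNNReal))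
              (gaussianReal (ν d i) ((σ d i ^ 2).toNNReal)))
          / (-(d : ℝ) ^ ((1:ℝ) - α) * ((∑ i : Fin d, |c d i|) / (d * Real.sqrt (2 * Real.pi)))))
      atTop (𝓝 1) := by
  have h2π : (0:ℝ) < Real.sqrt (2*π) := Real.sqrt_pos.2 (by positivity)
  have hM : 0 < M := lt_of_lt_of_le hm ((hbd 1 0).1.trans (hbd 1 0).2)
  set ε : ℕ → ℝ := fun d => (d:ℝ)^(-α) with hεdef
  have hε0 : Tendsto ε atTop (𝓝 0) := by
    have := tendsto_rpow_neg_atTop hα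
    exact this.comp tendsto_natCast_atTop_atTop
  set lo : ℕ → ℝ := fun d => rexp (-((M * ε d)^2/8)) with hlodef
  set hi : ℕ → ℝ := fun d => (1 - M * ε d / Real.sqrt (2*π))⁻¹ with hhidef
  have hτ0 : Tendsto (fun d => M * ε d / Real.sqrt (2*π)) atTop (𝓝 0) := by
    have := (hε0.const_mul M).div_const (Real.sqrt (2*π))
    simpa using this
  have hlo1 : Tendsto lo atTop (𝓝 1) := by
    have h1 : Tendsto (fun d => -((M * ε d)^2/8)) atTop (𝓝 0) := by
      have := (((hε0.const_mul M).pow 2).div_const 8).neg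
      simpa using this
    have := (Real.continuous_exp.tendsto 0).comp h1
    rw [Real.exp_zero] at this; exact this
  have hhi1 : Tendsto hi atTop (𝓝 1) := by
    have h1 : Tendsto (fun d => 1 - M * ε d / Real.sqrt (2*π)) atTop (𝓝 1) := by
      have := (tendsto_const_nhds (x := (1:ℝ)) (f := atTop)).sub hτ0
      simpa using this
    have := h1.inv₀ (one_ne_zero)
    simpa only [inv_one] using this
  have hev : ∀ᶠ d : ℕ in atTop, M * ε d / Real.sqrt (2*π) ≤ 1/2 := by
    have := hτ0.eventually (ge_mem_nhds (show (0:ℝ) < 1/2 by norm_num))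
    exact this.mono fun d hd => hd
  have key : ∀ d : ℕ, 1 ≤ d → M * ε d / Real.sqrt (2*π) ≤ 1/2 →
      lo d ≤ (Real.log (∏ i : Fin d,
            prMax (gaussianReal (μ d i) ((σ d i ^ 2).toNNReal))
              (gaussianReal (ν d i) ((σ d i ^ 2).toNNReal)))
          / (-(d : ℝ) ^ ((1:ℝ) - α) * ((∑ i : Fin d, |c d i|) / (d * Real.sqrt (2 * Real.pi)))))
      ∧ (Real.log (∏ i : Fin d,
            prMax (gaussianReal (μ d i) ((σ d i ^ 2).toNNReal))
              (gaussianReal (ν d i) ((σ d i ^ 2).toNNReal)))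
          / (-(d : ℝ) ^ ((1:ℝ) - α) * ((∑ i : Fin d, |c d i|) / (d * Real.sqrt (2 * Real.pi)))))
        ≤ hi d := by
    intro d hd1 hd2
    have hdpos : (0:ℝ) < d := by exact_mod_cast hd1
    have hεpos : 0 < ε d := Real.rpow_pos_of_pos hdpos _
    set τ : ℝ := M * ε d / Real.sqrt (2*π) with hτdef
    have hτnn : 0 ≤ τ := by positivity
    set r : Fin d → ℝ := fun i => |c d i| * ε d with hrdef
    have hrpos : ∀ i, 0 < r i := fun i => mul_pos (lt_of_lt_of_le hm (hbd d i).1) hεpos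
    have hrM : ∀ i, r i ≤ M * ε d := fun i => mul_le_mul_of_nonneg_right (hbd d i).2 hεpos.le
    set T : Fin d → ℝ := fun i => tvDist (gaussianReal (μ d i) ((σ d i ^2).toNNReal))
      (gaussianReal (ν d i) ((σ d i^2).toNNReal)) with hTdef
    have hδ : ∀ i, |μ d i - ν d i| = r i * σ d i := by
      intro i
      have h1 := hc d i
      have hσi := hσ d i
      have h2 : μ d i - ν d i = c d i * ε d * σ d i := by
        field_simp at h1
        rw [h1]
        simp only [hεdef]; ring
      rw [h2, abs_mul, abs_mul, abs_of_pos hσi, abs_of_pos hεpos]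
    have hTbd : ∀ i, r i / Real.sqrt (2*π) * rexp (-((r i)^2/8)) ≤ T i
        ∧ T i ≤ r i / Real.sqrt (2*π) :=
      fun i => tvDist_gaussian_bounds_abs (hσ d i) (hrpos i) (hδ i)
    have hbτ : ∀ i, r i / Real.sqrt (2*π) ≤ τ := fun i =>
      div_le_div_of_nonneg_right (hrM i) h2π.le
    have hTτ : ∀ i, T i ≤ τ := fun i => (hTbd i).2.trans (hbτ i)
    have hT0 : ∀ i, 0 ≤ T i := fun i => le_trans (by positivity) (hTbd i).1
    have h1T : ∀ i, 0 < 1 - T i := fun i => by linarith [hTτ i, hd2]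
    have h1τ : 0 < 1 - τ := by linarith [hd2]
    have hprod : (∏ i : Fin d,
            prMax (gaussianReal (μ d i) ((σ d i ^ 2).toNNReal))
              (gaussianReal (ν d i) ((σ d i ^ 2).toNNReal))) = ∏ i, (1 - T i) := rfl
    have hlogprod : Real.log (∏ i, (1 - T i)) = ∑ i, Real.log (1 - T i) :=
      Real.log_prod (fun i _ => ne_of_gt (h1T i))
    have hlog_ge : ∀ i, T i ≤ -Real.log (1 - T i) := by
      intro i
      have := Real.log_le_sub_one_of_pos (h1T i)
      linarith
    have hlog_le : ∀ i, -Real.log (1 - T i) ≤ T i / (1 - τ) := by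
      intro i
      have h2 : Real.log (1 - T i)⁻¹ ≤ (1 - T i)⁻¹ - 1 :=
        Real.log_le_sub_one_of_pos (inv_pos.2 (h1T i))
      rw [Real.log_inv] at h2
      have h3 : (1 - T i)⁻¹ - 1 = T i / (1 - T i) := by
        rw [eq_div_iff (ne_of_gt (h1T i)), sub_mul, inv_mul_cancel₀ (ne_of_gt (h1T i))]
        ring
      have h4 : T i / (1 - T i) ≤ T i / (1 - τ) :=
        div_le_div_of_nonneg_left (hT0 i) h1τ (by linarith [hTτ i])
      linarith
    set B : ℝ := ∑ i, r i / Real.sqrt (2*π) with hBdef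
    have hBpos : 0 < B := Finset.sum_pos (fun i _ => div_pos (hrpos i) h2π)
      (Finset.univ_nonempty_iff.2 ⟨⟨0, hd1⟩⟩)
    set estar : ℝ := rexp (-((M * ε d)^2/8)) with hestar
    have hsum_low : estar * B ≤ ∑ i, T i := by
      rw [hBdef, Finset.mul_sum]
      apply Finset.sum_le_sum
      intro i _
      refine le_trans ?_ (hTbd i).1
      rw [mul_comm]
      apply mul_le_mul_of_nonneg_left ?_ (by positivity)
      apply Real.exp_le_exp.2
      have : (r i)^2 ≤ (M * ε d)^2 := by nlinarith [hrpos i, hrM i]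
      linarith
    have hsum_hi : ∑ i, T i ≤ B := Finset.sum_le_sum fun i _ => (hTbd i).2
    set N : ℝ := ∑ i, Real.log (1 - T i) with hNdef
    have hnegN : -N = ∑ i, -Real.log (1 - T i) := by
      rw [hNdef, ← Finset.sum_neg_distrib]
    have hN_low : ∑ i, T i ≤ -N := by
      rw [hnegN]; exact Finset.sum_le_sum fun i _ => hlog_ge i
    have hN_hi : -N ≤ B / (1 - τ) := by
      rw [hnegN]
      calc ∑ i, -Real.log (1 - T i) ≤ ∑ i, T i / (1 - τ) :=
            Finset.sum_le_sum fun i _ => hlog_le i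
        _ = (∑ i, T i) / (1 - τ) := by rw [Finset.sum_div]
        _ ≤ B / (1 - τ) := div_le_div_of_nonneg_right hsum_hi h1τ.le
    -- denominator
    have hpow : (d:ℝ)^((1:ℝ)-α) = d * ε d := by
      have hεd : ε d = ((d:ℝ)^α)⁻¹ := by
        rw [hεdef]
        simp [Real.rpow_neg hdpos.le]
      rw [hεd, Real.rpow_sub hdpos, Real.rpow_one, div_eq_mul_inv]
    have hden : -(d : ℝ) ^ ((1:ℝ) - α) * ((∑ i : Fin d, |c d i|) / (d * Real.sqrt (2 * Real.pi)))
        = -B := by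
      rw [hpow, hBdef]
      have : ∑ i, r i / Real.sqrt (2*π) = (∑ i : Fin d, |c d i|) * (ε d / Real.sqrt (2*π)) := by
        rw [Finset.sum_mul]
        apply Finset.sum_congr rfl
        intro i _
        rw [hrdef]
        ring
      rw [this]
      field_simp
    rw [hprod, hlogprod, hden, div_neg, ← neg_div]
    constructor
    · have hlo_eq : lo d = estar := rfl
      rw [hlo_eq, le_div_iff₀ hBpos]
      linarith [hsum_low, hN_low]
    · have hhi_eq : hi d = (1 - τ)⁻¹ := rfl
      rw [hhi_eq, div_le_iff₀ hBpos]
      have heq : (1-τ)⁻¹ * B = B / (1-τ) := by field_simp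
      linarith [hN_hi, heq]
  apply tendsto_of_tendsto_of_tendsto_of_le_of_le' hlo1 hhi1
  · filter_upwards [eventually_ge_atTop 1, hev] with d hd1 hd2
    exact (key d hd1 hd2).1
  · filter_upwards [eventually_ge_atTop 1, hev] with d hd1 hd2
    exact (key d hd1 hd2).2
end
end

section
/- Let Q = [[I, M], [Mᵀ, I]] be a positive definite two-block precision matrix with identity diagonal blocks, let Σ = Q^{-1}, let L be a block lower-triangular matrix with LLᵀ = Σ, let B^F = [[0, −M], [0, MᵀM]] be the forward Gibbs autoregressive matrix, and set N^F := L^{-1}B^F L. Then for every integer t ≥ 2, ‖(N^F)^t‖₂ ≤ ρ(MᵀM)^{t−1}, and moreover ρ(B^F) = ρ(MᵀM). -/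
open Matrix
open scoped Classical

noncomputable section

/-- Euclidean norm of a finitely-indexed real vector. -/
def eNorm {ι : Type*} [Fintype ι] (v : ι → ℝ) : ℝ := Real.sqrt (∑ i, (v i) ^ 2)

/-- Spectral radius of a real matrix: the largest modulus of its (complex) eigenvalues. -/
def specRad {ι : Type*} [Fintype ι] [DecidableEq ι] (B : Matrix ι ι ℝ) : ℝ :=
  sSup {r : ℝ | ∃ z : ℂ, z ∈ spectrum ℂ (B.map Complex.ofReal) ∧ r = ‖z‖}

/-- Spectral (induced 2-) norm of a real matrix. -/
def specNorm {ι : Type*} [Fintype ι] (A : Matrix ι ι ℝ) : ℝ :=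
  sSup {r : ℝ | ∃ v : ι → ℝ, eNorm v ≤ 1 ∧ r = eNorm (A.mulVec v)}

/-! ### Auxiliary lemmas -/

lemma aux_map_ofReal (k : ℕ) (X : Matrix (Fin k) (Fin k) ℝ) :
    X.map Complex.ofReal = (Complex.ofRealHom.mapMatrix : Matrix (Fin k) (Fin k) ℝ →+* _) X := rfl

lemma aux_map_star (k : ℕ) (X : Matrix (Fin k) (Fin k) ℝ) :
    (star X).map Complex.ofReal = star (X.map Complex.ofReal) := by
  ext i j
  simp [Matrix.star_eq_conjTranspose, Matrix.conjTranspose_apply]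

lemma aux_map_spectral (k : ℕ) (S : Matrix (Fin k) (Fin k) ℝ) (hS : S.IsHermitian) (z : ℂ) :
    (algebraMap ℂ (Matrix (Fin k) (Fin k) ℂ) z - S.map Complex.ofReal).det
      = ∏ i, (z - (hS.eigenvalues i : ℂ)) := by
  classical
  set U : Matrix (Fin k) (Fin k) ℝ := (hS.eigenvectorUnitary : Matrix (Fin k) (Fin k) ℝ) with hUdef
  have hUU : U * star U = 1 := Matrix.mem_unitaryGroup_iff.mp hS.eigenvectorUnitary.2
  set φ : Matrix (Fin k) (Fin k) ℝ →+* Matrix (Fin k) (Fin k) ℂ := Complex.ofRealHom.mapMatrix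
  set U' : Matrix (Fin k) (Fin k) ℂ := φ U with hU'def
  have hU'U' : U' * star U' = 1 := by
    have h := congrArg φ hUU
    rw [_root_.map_mul, _root_.map_one] at h
    rwa [show φ (star U) = star U' from by
      rw [hU'def, ← aux_map_ofReal, ← aux_map_ofReal, aux_map_star]] at h
  have hdiagmap : φ (diagonal (RCLike.ofReal ∘ hS.eigenvalues))
      = diagonal (fun i => (hS.eigenvalues i : ℂ)) := by
    ext i j
    by_cases h : i = j <;>
      simp [φ, RingHom.mapMatrix_apply, Matrix.map_apply, Matrix.diagonal_apply, h]
  have hSmap : S.map Complex.ofReal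
      = U' * diagonal (fun i => (hS.eigenvalues i : ℂ)) * star U' := by
    rw [aux_map_ofReal]
    conv_lhs => rw [hS.spectral_theorem, Unitary.conjStarAlgAut_apply]
    rw [_root_.map_mul, _root_.map_mul, hdiagmap]
    congr 1
    rw [show φ (star ↑hS.eigenvectorUnitary) = star U' from by
      rw [hU'def, ← aux_map_ofReal, ← aux_map_ofReal, aux_map_star, hUdef]]
  have halg : algebraMap ℂ (Matrix (Fin k) (Fin k) ℂ) z = U' * (diagonal fun _ => z) * star U' := by
    have h1 : (diagonal fun _ : Fin k => z) = z • (1 : Matrix (Fin k) (Fin k) ℂ) := by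
      rw [Matrix.smul_one_eq_diagonal]
    rw [h1, Matrix.mul_smul, Matrix.mul_one, Matrix.smul_mul, hU'U',
      Algebra.algebraMap_eq_smul_one]
  rw [halg, hSmap, ← Matrix.sub_mul, ← Matrix.mul_sub, Matrix.diagonal_sub]
  rw [Matrix.det_mul_right_comm, hU'U', Matrix.one_mul, Matrix.det_diagonal]

lemma aux_spectrum_eq (k : ℕ) (S : Matrix (Fin k) (Fin k) ℝ) (hS : S.IsHermitian) :
    spectrum ℂ (S.map Complex.ofReal) = Set.range (fun i => (hS.eigenvalues i : ℂ)) := by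
  ext z
  rw [spectrum.mem_iff]
  rw [Matrix.isUnit_iff_isUnit_det, isUnit_iff_ne_zero, not_ne_iff]
  rw [aux_map_spectral k S hS z]
  rw [Finset.prod_eq_zero_iff]
  constructor
  · rintro ⟨i, -, hi⟩
    exact ⟨i, (sub_eq_zero.mp hi).symm⟩
  · rintro ⟨i, hi⟩
    exact ⟨i, Finset.mem_univ i, sub_eq_zero.mpr hi.symm⟩

lemma aux_radSet_eq (k : ℕ) (S : Matrix (Fin k) (Fin k) ℝ) (hS : S.PosSemidef) :
    {r : ℝ | ∃ z : ℂ, z ∈ spectrum ℂ (S.map Complex.ofReal) ∧ r = ‖z‖}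
      = Set.range (fun i => hS.1.eigenvalues i) := by
  ext r
  simp only [Set.mem_setOf_eq, aux_spectrum_eq k S hS.1, Set.mem_range]
  constructor
  · rintro ⟨z, ⟨i, hi⟩, rfl⟩
    exact ⟨i, by rw [← hi, Complex.norm_real, Real.norm_eq_abs, abs_of_nonneg (hS.eigenvalues_nonneg i)]⟩
  · rintro ⟨i, rfl⟩
    exact ⟨(hS.1.eigenvalues i : ℂ), ⟨i, rfl⟩,
      by rw [Complex.norm_real, Real.norm_eq_abs, abs_of_nonneg (hS.eigenvalues_nonneg i)]⟩

lemma aux_specRad_nonneg {ι : Type*} [Fintype ι] [DecidableEq ι] (B : Matrix ι ι ℝ) :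
    0 ≤ specRad B :=
  Real.sSup_nonneg (by rintro x ⟨z, -, rfl⟩; exact norm_nonneg z)

lemma aux_eig_le_specRad (k : ℕ) (S : Matrix (Fin k) (Fin k) ℝ) (hS : S.PosSemidef) (i : Fin k) :
    hS.1.eigenvalues i ≤ specRad S := by
  rw [specRad, aux_radSet_eq k S hS]
  exact le_csSup (Set.finite_range _).bddAbove ⟨i, rfl⟩

lemma aux_specRad_le (k : ℕ) (S : Matrix (Fin k) (Fin k) ℝ) (hS : S.PosSemidef) (c : ℝ)
    (hc : 0 ≤ c) (h : ∀ i, hS.1.eigenvalues i ≤ c) : specRad S ≤ c := by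
  rw [specRad, aux_radSet_eq k S hS]
  exact Real.sSup_le (by rintro x ⟨i, rfl⟩; exact h i) hc

lemma aux_eig_lt_one (k : ℕ) (S : Matrix (Fin k) (Fin k) ℝ) (hS : S.IsHermitian)
    (hPD : ∀ v : Fin k → ℝ, v ≠ 0 → 0 < v ⬝ᵥ ((1 - S) *ᵥ v)) (i : Fin k) :
    hS.eigenvalues i < 1 := by
  set v : Fin k → ℝ := (WithLp.equiv 2 _) (hS.eigenvectorBasis i) with hv
  have hv0 : v ≠ 0 := by
    intro h0
    have : hS.eigenvectorBasis i = 0 := by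
      apply (WithLp.equiv 2 _).injective
      simpa [hv] using h0
    exact hS.eigenvectorBasis.orthonormal.ne_zero i this
  have hmul : S *ᵥ v = hS.eigenvalues i • v := hS.mulVec_eigenvectorBasis i
  have hpos := hPD v hv0
  rw [Matrix.sub_mulVec, Matrix.one_mulVec, dotProduct_sub, hmul, dotProduct_smul] at hpos
  have hvv : 0 < v ⬝ᵥ v := by
    rcases Function.ne_iff.mp hv0 with ⟨j, hj⟩
    have hj2 : 0 < v j * v j := mul_self_pos.mpr (by simpa using hj)
    calc (0:ℝ) < v j * v j := hj2
      _ ≤ ∑ p, v p * v p := Finset.single_le_sum (f := fun p => v p * v p)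
          (fun p _ => mul_self_nonneg _) (Finset.mem_univ j)
      _ = v ⬝ᵥ v := rfl
  rw [smul_eq_mul] at hpos
  nlinarith [hpos, hvv]

lemma aux_det_fromBlocks_char (d₁ d₂ : ℕ) (M : Matrix (Fin d₁) (Fin d₂) ℝ)
    (S : Matrix (Fin d₂) (Fin d₂) ℝ) (z : ℂ) :
    (algebraMap ℂ (Matrix (Fin d₁ ⊕ Fin d₂) (Fin d₁ ⊕ Fin d₂) ℂ) z
        - (Matrix.fromBlocks 0 (-M) 0 S).map Complex.ofReal).det
      = z ^ d₁ * (algebraMap ℂ (Matrix (Fin d₂) (Fin d₂) ℂ) z - S.map Complex.ofReal).det := by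
  classical
  have halg : algebraMap ℂ (Matrix (Fin d₁ ⊕ Fin d₂) (Fin d₁ ⊕ Fin d₂) ℂ) z
      = Matrix.fromBlocks (diagonal fun _ : Fin d₁ => z) 0 0 (diagonal fun _ : Fin d₂ => z) := by
    rw [Algebra.algebraMap_eq_smul_one, Matrix.smul_one_eq_diagonal, Matrix.fromBlocks_diagonal]
    congr 1
    funext p
    cases p <;> simp
  have hmap : (Matrix.fromBlocks (0 : Matrix (Fin d₁) (Fin d₁) ℝ) (-M) 0 S).map Complex.ofReal
      = Matrix.fromBlocks (0 : Matrix (Fin d₁) (Fin d₁) ℂ) (-(M.map Complex.ofReal)) 0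
          (S.map Complex.ofReal) := by
    ext (i | i) (j | j) <;> simp [Matrix.map_apply, Matrix.fromBlocks]
  have halg2 : algebraMap ℂ (Matrix (Fin d₂) (Fin d₂) ℂ) z = diagonal fun _ : Fin d₂ => z := by
    rw [Algebra.algebraMap_eq_smul_one, Matrix.smul_one_eq_diagonal]
  rw [show (Matrix.fromBlocks 0 (-M) 0 S : Matrix (Fin d₁ ⊕ Fin d₂) (Fin d₁ ⊕ Fin d₂) ℝ)
    = Matrix.fromBlocks (0 : Matrix (Fin d₁) (Fin d₁) ℝ) (-M) 0 S from rfl, halg, hmap, halg2]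
  have hsub : Matrix.fromBlocks (diagonal fun _ : Fin d₁ => z) 0 0 (diagonal fun _ : Fin d₂ => z)
      - Matrix.fromBlocks 0 (-(M.map Complex.ofReal)) 0 (S.map Complex.ofReal)
      = Matrix.fromBlocks (diagonal fun _ : Fin d₁ => z) (M.map Complex.ofReal) 0
          ((diagonal fun _ : Fin d₂ => z) - S.map Complex.ofReal) := by
    rw [sub_eq_add_neg, Matrix.fromBlocks_neg, Matrix.fromBlocks_add]
    congr 1 <;> simp [sub_eq_add_neg]
  rw [hsub, Matrix.det_fromBlocks_zero₂₁, Matrix.det_diagonal]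
  simp [Finset.prod_const]

lemma aux_specRad_BF (d₁ d₂ : ℕ) (M : Matrix (Fin d₁) (Fin d₂) ℝ)
    (S : Matrix (Fin d₂) (Fin d₂) ℝ) (hS : S.PosSemidef) :
    specRad (Matrix.fromBlocks 0 (-M) 0 S) = specRad S := by
  classical
  set BFm : Matrix (Fin d₁ ⊕ Fin d₂) (Fin d₁ ⊕ Fin d₂) ℝ := Matrix.fromBlocks 0 (-M) 0 S with hBFm
  set TB := {r : ℝ | ∃ z : ℂ, z ∈ spectrum ℂ (BFm.map Complex.ofReal)
      ∧ r = ‖z‖} with hTB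
  set TS := {r : ℝ | ∃ z : ℂ, z ∈ spectrum ℂ (S.map Complex.ofReal) ∧ r = ‖z‖} with hTS
  have hTSfin : TS.Finite := by
    rw [hTS, aux_radSet_eq d₂ S hS]; exact Set.finite_range _
  have hcharB : ∀ z : ℂ, z ∈ spectrum ℂ (BFm.map Complex.ofReal)
      ↔ z ^ d₁ * (algebraMap ℂ (Matrix (Fin d₂) (Fin d₂) ℂ) z - S.map Complex.ofReal).det = 0 := by
    intro z
    rw [hBFm, spectrum.mem_iff, Matrix.isUnit_iff_isUnit_det, isUnit_iff_ne_zero, not_ne_iff,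
      aux_det_fromBlocks_char d₁ d₂ M S z]
  have hcharS : ∀ z : ℂ, z ∈ spectrum ℂ (S.map Complex.ofReal)
      ↔ (algebraMap ℂ (Matrix (Fin d₂) (Fin d₂) ℂ) z - S.map Complex.ofReal).det = 0 := by
    intro z
    rw [spectrum.mem_iff, Matrix.isUnit_iff_isUnit_det, isUnit_iff_ne_zero, not_ne_iff]
  have hsubset : TB ⊆ insert 0 TS := by
    rintro r ⟨z, hz, rfl⟩
    rcases mul_eq_zero.mp ((hcharB z).mp hz) with h | h
    · left
      have : z = 0 := by
        rcases pow_eq_zero_iff'.mp h with ⟨h0, -⟩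
        exact h0
      simp [this]
    · right
      exact ⟨z, (hcharS z).mpr h, rfl⟩
  have hTBfin : TB.Finite := Set.Finite.subset (hTSfin.insert 0) hsubset
  apply le_antisymm
  · apply Real.sSup_le _ (aux_specRad_nonneg S)
    rintro r hr
    rcases hsubset hr with h | h
    · rw [h]; exact aux_specRad_nonneg S
    · exact le_csSup hTSfin.bddAbove h
  · apply Real.sSup_le _ (aux_specRad_nonneg _)
    rintro r ⟨z, hz, rfl⟩
    refine le_csSup hTBfin.bddAbove ⟨z, ?_, rfl⟩
    rw [hcharB]
    rw [(hcharS z).mp hz, mul_zero]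

lemma aux_conj_pow (k : ℕ) (V : Matrix (Fin k) (Fin k) ℝ) (d : Fin k → ℝ)
    (hV : V * Vᴴ = 1) (j : ℕ) :
    (V * diagonal d * Vᴴ) ^ j = V * diagonal (fun i => d i ^ j) * Vᴴ := by
  have hV' : Vᴴ * V = 1 := mul_eq_one_comm.mp hV
  induction j with
  | zero =>
    rw [pow_zero, show (diagonal fun i => d i ^ 0) = (1 : Matrix (Fin k) (Fin k) ℝ) from by
      rw [show (fun i : Fin k => d i ^ 0) = fun _ => (1:ℝ) from funext fun i => pow_zero _,
        Matrix.diagonal_one], Matrix.mul_one, hV]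
  | succ j ih =>
    rw [pow_succ, ih, show V * diagonal (fun i => d i ^ j) * Vᴴ * (V * diagonal d * Vᴴ)
        = V * diagonal (fun i => d i ^ j) * (Vᴴ * V) * diagonal d * Vᴴ from by noncomm_ring,
      hV', Matrix.mul_one, Matrix.mul_assoc V, Matrix.diagonal_mul_diagonal,
      show (fun i => d i ^ j * d i) = fun i => d i ^ (j+1) from funext fun i => (pow_succ _ _).symm]

lemma aux_eig_package (k : ℕ) (S : Matrix (Fin k) (Fin k) ℝ) (hS : S.PosSemidef)
    (c : ℝ) (hle : ∀ i, hS.1.eigenvalues i ≤ c) (h1 : ∀ i, hS.1.eigenvalues i ≤ 1) :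
    ∃ (V : Matrix (Fin k) (Fin k) ℝ) (d : Fin k → ℝ),
      V * Vᴴ = 1 ∧ (∀ j : ℕ, S ^ j = V * diagonal (fun i => d i ^ j) * Vᴴ)
        ∧ ∀ i, 0 ≤ d i ∧ d i ≤ c ∧ d i ≤ 1 := by
  classical
  refine ⟨(hS.1.eigenvectorUnitary : Matrix (Fin k) (Fin k) ℝ), hS.1.eigenvalues, ?_, ?_, ?_⟩
  · rw [← Matrix.star_eq_conjTranspose]
    exact Matrix.mem_unitaryGroup_iff.mp hS.1.eigenvectorUnitary.2
  · intro j
    have hUU : (hS.1.eigenvectorUnitary : Matrix (Fin k) (Fin k) ℝ)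
        * (hS.1.eigenvectorUnitary : Matrix (Fin k) (Fin k) ℝ)ᴴ = 1 := by
      rw [← Matrix.star_eq_conjTranspose]
      exact Matrix.mem_unitaryGroup_iff.mp hS.1.eigenvectorUnitary.2
    have hspec : S = (hS.1.eigenvectorUnitary : Matrix (Fin k) (Fin k) ℝ)
        * diagonal hS.1.eigenvalues * (hS.1.eigenvectorUnitary : Matrix (Fin k) (Fin k) ℝ)ᴴ := by
      rw [← Matrix.star_eq_conjTranspose]
      conv_lhs => rw [hS.1.spectral_theorem, Unitary.conjStarAlgAut_apply]
      rfl
    conv_lhs => rw [hspec]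
    exact aux_conj_pow k _ _ hUU j
  · exact fun i => ⟨hS.eigenvalues_nonneg i, hle i, h1 i⟩

lemma aux_main_psd (k : ℕ) (S : Matrix (Fin k) (Fin k) ℝ) (hS : S.PosSemidef)
    (c : ℝ) (hc0 : 0 ≤ c) (hc1 : c ≤ 1)
    (hle : ∀ i, hS.1.eigenvalues i ≤ c) (h1 : ∀ i, hS.1.eigenvalues i ≤ 1) (n : ℕ) :
    (c ^ (2*n) • ((1 : Matrix (Fin k) (Fin k) ℝ) - S) - (S ^ (2*n+1) - S ^ (2*n+2))).PosSemidef := by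
  classical
  obtain ⟨V, d, hV, hdec, hbound⟩ := aux_eig_package k S hS c hle h1
  have hone : (1 : Matrix (Fin k) (Fin k) ℝ) = V * diagonal (fun i => d i ^ 0) * Vᴴ := by
    rw [← hdec 0, pow_zero]
  have hSd : S = V * diagonal (fun i => d i ^ 1) * Vᴴ := by rw [← hdec 1, pow_one]
  have hX : c ^ (2*n) • ((1 : Matrix (Fin k) (Fin k) ℝ) - S) - (S ^ (2*n+1) - S ^ (2*n+2))
      = V * diagonal (fun i => (1 - d i) * (c ^ (2*n) - d i ^ (2*n+1))) * Vᴴ := by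
    rw [hdec (2*n+1), hdec (2*n+2)]
    conv_lhs => rw [hSd, hone]
    rw [show (fun i => (1 - d i) * (c ^ (2*n) - d i ^ (2*n+1)))
        = fun i => c ^ (2*n) • (d i ^ 0 - d i ^ 1) - (d i ^ (2*n+1) - d i ^ (2*n+2)) from by
      funext i; simp only [smul_eq_mul, pow_zero, pow_one]; ring]
    rw [show (diagonal fun i => c ^ (2*n) • (d i ^ 0 - d i ^ 1) - (d i ^ (2*n+1) - d i ^ (2*n+2)))
        = c ^ (2*n) • (diagonal (fun i => d i ^ 0) - diagonal (fun i => d i ^ 1))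
            - (diagonal (fun i => d i ^ (2*n+1)) - diagonal (fun i => d i ^ (2*n+2))) from by
      ext i j
      by_cases h : i = j <;>
        simp [Matrix.diagonal_apply, h, Matrix.sub_apply, Matrix.smul_apply]]
    simp only [Matrix.mul_sub, Matrix.sub_mul, Matrix.mul_smul, Matrix.smul_mul, smul_sub]
  rw [hX]
  apply Matrix.PosSemidef.mul_mul_conjTranspose_same
  apply Matrix.posSemidef_diagonal_iff.mpr
  intro i
  obtain ⟨hl0, hlc, hl1⟩ := hbound i
  have key : d i ^ (2*n+1) ≤ c ^ (2*n) := by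
    calc d i ^ (2*n+1) ≤ c ^ (2*n+1) := pow_le_pow_left₀ hl0 hlc _
      _ = c ^ (2*n) * c := pow_succ c (2*n)
      _ ≤ c ^ (2*n) * 1 := mul_le_mul_of_nonneg_left hc1 (pow_nonneg hc0 _)
      _ = c ^ (2*n) := mul_one _
  exact mul_nonneg (by linarith) (by linarith)

/-- the block row `[0 1]`. -/
def auxR (d₁ d₂ : ℕ) : Matrix (Fin d₂) (Fin d₁ ⊕ Fin d₂) ℝ :=
  Matrix.of fun i j => if j = Sum.inr i then 1 else 0

lemma auxR_corner (d₁ d₂ : ℕ) (G : Matrix (Fin d₂) (Fin d₂) ℝ) :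
    (auxR d₁ d₂)ᵀ * G * auxR d₁ d₂
      = (Matrix.fromBlocks 0 0 0 G : Matrix (Fin d₁ ⊕ Fin d₂) (Fin d₁ ⊕ Fin d₂) ℝ) := by
  ext (i | i) (j | j) <;>
    simp [auxR, Matrix.mul_apply, Matrix.fromBlocks, Matrix.transpose_apply, Finset.sum_ite_eq,
      Finset.sum_ite_eq']

lemma auxR_block (d₁ d₂ : ℕ) (a : Matrix (Fin d₁) (Fin d₁) ℝ) (b : Matrix (Fin d₁) (Fin d₂) ℝ)
    (c : Matrix (Fin d₂) (Fin d₁) ℝ) (dd : Matrix (Fin d₂) (Fin d₂) ℝ) :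
    auxR d₁ d₂ * Matrix.fromBlocks a b c dd * (auxR d₁ d₂)ᵀ = dd := by
  ext i j
  simp [auxR, Matrix.mul_apply, Matrix.fromBlocks, Matrix.transpose_apply, Finset.sum_ite_eq,
    Finset.sum_ite_eq', Fintype.sum_sum_type]

lemma aux_qf_eq {ι κ : Type*} [Fintype ι] [Fintype κ] (B : Matrix ι κ ℝ) (v : κ → ℝ) :
    (B *ᵥ v) ⬝ᵥ (B *ᵥ v) = v ⬝ᵥ ((Bᵀ * B) *ᵥ v) := by
  rw [← Matrix.mulVec_mulVec, Matrix.dotProduct_mulVec v Bᵀ, Matrix.vecMul_transpose]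

lemma aux_conj_qf {ι κ : Type*} [Fintype ι] [Fintype κ] (B : Matrix ι κ ℝ) (G : Matrix ι ι ℝ)
    (v : κ → ℝ) :
    v ⬝ᵥ ((Bᵀ * G * B) *ᵥ v) = (B *ᵥ v) ⬝ᵥ (G *ᵥ (B *ᵥ v)) := by
  rw [← Matrix.mulVec_mulVec, ← Matrix.mulVec_mulVec, Matrix.dotProduct_mulVec v Bᵀ,
    Matrix.vecMul_transpose]

/-- Lemma: powers of the similarity-transformed forward two-block Gibbs
matrix.  For `Q = [[I, M],[Mᵀ, I]]` positive definite, `Σ = Q⁻¹`, `L` block lower-triangular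
with `LLᵀ = Σ`, `B^F = [[0, −M],[0, MᵀM]]` and `N^F = L⁻¹B^F L`, one has
`ρ(B^F) = ρ(MᵀM)` and `‖(N^F)^t‖₂ ≤ ρ(MᵀM)^{t−1}` for every `t ≥ 2`. -/
theorem two_block_normalized_forward_matrix_power_norm_bound
    (d₁ d₂ : ℕ) (M : Matrix (Fin d₁) (Fin d₂) ℝ)
    (hQ : (Matrix.fromBlocks 1 M Mᵀ 1).PosDef)
    (L₁₁ : Matrix (Fin d₁) (Fin d₁) ℝ) (L₂₁ : Matrix (Fin d₂) (Fin d₁) ℝ)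
    (L₂₂ : Matrix (Fin d₂) (Fin d₂) ℝ)
    (L : Matrix (Fin d₁ ⊕ Fin d₂) (Fin d₁ ⊕ Fin d₂) ℝ)
    (hLtri : L = Matrix.fromBlocks L₁₁ 0 L₂₁ L₂₂)
    (hL : L * Lᵀ = (Matrix.fromBlocks 1 M Mᵀ 1)⁻¹)
    (hLdet : IsUnit L.det)
    (BF : Matrix (Fin d₁ ⊕ Fin d₂) (Fin d₁ ⊕ Fin d₂) ℝ)
    (hBF : BF = Matrix.fromBlocks 0 (-M) 0 (Mᵀ * M)) :
    specRad BF = specRad (Mᵀ * M)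
    ∧ ∀ t : ℕ, 2 ≤ t → specNorm ((L⁻¹ * BF * L) ^ t) ≤ specRad (Mᵀ * M) ^ (t - 1) := by
  classical
  set Q : Matrix (Fin d₁ ⊕ Fin d₂) (Fin d₁ ⊕ Fin d₂) ℝ := Matrix.fromBlocks 1 M Mᵀ 1 with hQdef
  set S : Matrix (Fin d₂) (Fin d₂) ℝ := Mᵀ * M with hSdef
  have hS : S.PosSemidef := by
    have h := Matrix.posSemidef_conjTranspose_mul_self M
    have hMt : Mᴴ = Mᵀ := by ext i j; simp [Matrix.conjTranspose_apply]
    rwa [hMt] at h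
  have hST : Sᵀ = S := by rw [hSdef, Matrix.transpose_mul, Matrix.transpose_transpose]
  -- positive definiteness of 1 - S
  have hPD1S : ∀ y : Fin d₂ → ℝ, y ≠ 0 → 0 < y ⬝ᵥ ((1 - S) *ᵥ y) := by
    intro y hy
    set x : (Fin d₁ ⊕ Fin d₂) → ℝ := Sum.elim (-(M *ᵥ y)) y with hx
    have hx0 : x ≠ 0 := by
      intro h0
      apply hy
      funext j
      have := congrFun h0 (Sum.inr j)
      simpa [hx] using this
    have hq := hQ.dotProduct_mulVec_pos hx0
    simp only [star_trivial] at hq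
    rw [hQdef, Matrix.fromBlocks_mulVec, Matrix.dotProduct_block] at hq
    simp only [hx, Sum.elim_comp_inl, Sum.elim_comp_inr, Matrix.one_mulVec,
      Matrix.mulVec_neg, neg_add_cancel, dotProduct_zero, zero_add] at hq
    have hrw : y ⬝ᵥ (-(Mᵀ *ᵥ (M *ᵥ y)) + y) = y ⬝ᵥ ((1 - S) *ᵥ y) := by
      rw [Matrix.sub_mulVec, Matrix.one_mulVec, hSdef, ← Matrix.mulVec_mulVec]
      congr 1
      abel
    rw [← hrw]
    exact hq
  have hlam1 : ∀ i, hS.1.eigenvalues i ≤ 1 := fun i => (aux_eig_lt_one d₂ S hS.1 hPD1S i).le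
  set ρ : ℝ := specRad S with hρdef
  have hρ0 : 0 ≤ ρ := aux_specRad_nonneg S
  have hρ1 : ρ ≤ 1 := aux_specRad_le d₂ S hS 1 zero_le_one hlam1
  have hlamρ : ∀ i, hS.1.eigenvalues i ≤ ρ := fun i => aux_eig_le_specRad d₂ S hS i
  constructor
  · rw [hBF]
    exact aux_specRad_BF d₁ d₂ M S hS
  -- Part 2
  intro t ht
  obtain ⟨n, rfl⟩ : ∃ n, t = n + 1 := ⟨t - 1, by omega⟩
  have htm1 : (n + 1) - 1 = n := by omega
  rw [htm1]
  -- basic invertibility facts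
  have hQdetU : IsUnit Q.det := (Matrix.isUnit_iff_isUnit_det Q).mp hQ.isUnit
  have hQSig : Q * (L * Lᵀ) = 1 := by rw [hL]; exact Matrix.mul_nonsing_inv Q hQdetU
  -- block structure of L * Lᵀ
  set K : Matrix (Fin d₁) (Fin d₂) ℝ := L₁₁ * L₂₁ᵀ with hKdef
  set W : Matrix (Fin d₂) (Fin d₂) ℝ := L₂₁ * L₂₁ᵀ + L₂₂ * L₂₂ᵀ with hWdef
  have hLLT : L * Lᵀ = Matrix.fromBlocks (L₁₁ * L₁₁ᵀ) K (L₂₁ * L₁₁ᵀ) W := by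
    rw [hLtri, Matrix.fromBlocks_transpose, Matrix.fromBlocks_multiply]
    apply Matrix.fromBlocks_inj.mpr
    refine ⟨by simp, by simp [hKdef], by simp, by simp [hWdef]⟩
  have hblocks : Matrix.fromBlocks
      ((1 : Matrix (Fin d₁) (Fin d₁) ℝ) * (L₁₁ * L₁₁ᵀ) + M * (L₂₁ * L₁₁ᵀ))
      ((1 : Matrix (Fin d₁) (Fin d₁) ℝ) * K + M * W)
      (Mᵀ * (L₁₁ * L₁₁ᵀ) + (1 : Matrix (Fin d₂) (Fin d₂) ℝ) * (L₂₁ * L₁₁ᵀ))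
      (Mᵀ * K + (1 : Matrix (Fin d₂) (Fin d₂) ℝ) * W)
      = Matrix.fromBlocks 1 0 0 1 := by
    rw [← Matrix.fromBlocks_multiply, ← hLLT, ← hQdef, hQSig, Matrix.fromBlocks_one]
  have h12 : K + M * W = 0 := by
    have := (Matrix.fromBlocks_inj.mp hblocks).2.1
    rwa [Matrix.one_mul] at this
  have h22 : Mᵀ * K + W = 1 := by
    have := (Matrix.fromBlocks_inj.mp hblocks).2.2.2
    rwa [Matrix.one_mul] at this
  have h1SW : (1 - S) * W = 1 := by
    have hMW : M * W = -K := by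
      have := h12
      rw [show (0 : Matrix (Fin d₁) (Fin d₂) ℝ) = K + -K from by abel] at this
      exact add_left_cancel this
    rw [Matrix.sub_mul, Matrix.one_mul, hSdef, Matrix.mul_assoc, hMW, Matrix.mul_neg,
      sub_neg_eq_add, add_comm, h22]
  have hW1S : W * (1 - S) = 1 := mul_eq_one_comm.mp h1SW
  -- the matrix A = [L₂₁ L₂₂]
  set A : Matrix (Fin d₂) (Fin d₁ ⊕ Fin d₂) ℝ := auxR d₁ d₂ * L with hAdef
  have hAAT : A * Aᵀ = W := by
    calc A * Aᵀ = auxR d₁ d₂ * (L * Lᵀ) * (auxR d₁ d₂)ᵀ := by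
          rw [hAdef, Matrix.transpose_mul]
          simp only [Matrix.mul_assoc]
      _ = W := by rw [hLLT]; exact auxR_block d₁ d₂ _ _ _ _
  -- power identities
  have hLiL : L⁻¹ * L = 1 := Matrix.nonsing_inv_mul L hLdet
  have hLLi : L * L⁻¹ = 1 := Matrix.mul_nonsing_inv L hLdet
  have hNpow : ∀ m : ℕ, (L⁻¹ * BF * L) ^ m = L⁻¹ * BF ^ m * L := by
    intro m
    induction m with
    | zero => rw [pow_zero, pow_zero, Matrix.mul_one, hLiL]
    | succ m ih =>
      rw [pow_succ, ih, pow_succ, show L⁻¹ * BF ^ m * L * (L⁻¹ * BF * L)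
          = L⁻¹ * BF ^ m * (L * L⁻¹) * BF * L from by noncomm_ring, hLLi, Matrix.mul_one,
        Matrix.mul_assoc (L⁻¹), Matrix.mul_assoc (L⁻¹), Matrix.mul_assoc (BF ^ m)]
  have hBt : ∀ m : ℕ, BF ^ (m + 1)
      = Matrix.fromBlocks 0 (-(M * S ^ m)) 0 (S ^ (m + 1)) := by
    intro m
    induction m with
    | zero => rw [pow_one, hBF, pow_zero, Matrix.mul_one, pow_one, hSdef]
    | succ m ih =>
      rw [pow_succ, ih, hBF, Matrix.fromBlocks_multiply]
      apply Matrix.fromBlocks_inj.mpr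
      refine ⟨by simp, ?_, by simp, ?_⟩
      · rw [Matrix.zero_mul, zero_add, Matrix.neg_mul, Matrix.mul_assoc, ← pow_succ]
      · rw [Matrix.zero_mul, zero_add, ← pow_succ]
  set G : Matrix (Fin d₂) (Fin d₂) ℝ := S ^ (2*n+1) - S ^ (2*n+2) with hGdef
  have hQBt : Q * BF ^ (n+1) = Matrix.fromBlocks 0 (M * S ^ (n+1) - M * S ^ n) 0 0 := by
    rw [hBt n, hQdef, Matrix.fromBlocks_multiply]
    apply Matrix.fromBlocks_inj.mpr
    refine ⟨by simp, ?_, by simp, ?_⟩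
    · rw [Matrix.one_mul]
      abel
    · rw [Matrix.one_mul, Matrix.mul_neg, ← Matrix.mul_assoc, ← hSdef, ← pow_succ']
      abel
  have epow : ∀ m : ℕ, S ^ n * Mᵀ * (M * S ^ m) = S ^ (n + (m + 1)) := by
    intro m
    rw [Matrix.mul_assoc (S ^ n), ← Matrix.mul_assoc Mᵀ, ← hSdef, ← pow_succ', ← pow_add]
  have hMid : (BF ^ (n+1))ᵀ * (Q * BF ^ (n+1)) = Matrix.fromBlocks 0 0 0 G := by
    rw [hQBt, hBt n, Matrix.fromBlocks_transpose, Matrix.fromBlocks_multiply]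
    apply Matrix.fromBlocks_inj.mpr
    refine ⟨by simp, by simp, by simp, ?_⟩
    rw [Matrix.mul_zero, add_zero, Matrix.transpose_neg, Matrix.transpose_mul,
      Matrix.transpose_pow, hST, Matrix.neg_mul, Matrix.mul_sub, epow (n+1), epow n, hGdef,
      show n + (n + 1 + 1) = 2*n+2 from by ring, show n + (n + 1) = 2*n+1 from by ring]
    abel
  have hLQ : (L⁻¹)ᵀ * L⁻¹ = Q := by
    rw [Matrix.transpose_nonsing_inv, ← Matrix.mul_inv_rev, hL,
      Matrix.nonsing_inv_nonsing_inv Q hQdetU]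
  have hGram : (L⁻¹ * BF ^ (n+1) * L)ᵀ * (L⁻¹ * BF ^ (n+1) * L) = Aᵀ * G * A := by
    rw [Matrix.transpose_mul, Matrix.transpose_mul,
      show Lᵀ * ((BF ^ (n+1))ᵀ * (L⁻¹)ᵀ) * (L⁻¹ * BF ^ (n+1) * L)
        = Lᵀ * ((BF ^ (n+1))ᵀ * ((L⁻¹)ᵀ * L⁻¹ * BF ^ (n+1))) * L from by noncomm_ring,
      hLQ, hMid, ← auxR_corner d₁ d₂ G, hAdef,
      Matrix.transpose_mul]
    simp only [Matrix.mul_assoc]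
  set P : Matrix (Fin d₁ ⊕ Fin d₂) (Fin d₁ ⊕ Fin d₂) ℝ := Aᵀ * ((1 : Matrix (Fin d₂) (Fin d₂) ℝ) - S) * A with hPdef
  have hPP : P * P = P := by
    calc P * P = Aᵀ * ((1 : Matrix (Fin d₂) (Fin d₂) ℝ) - S) * (A * Aᵀ)
          * (((1 : Matrix (Fin d₂) (Fin d₂) ℝ) - S) * A) := by
          rw [hPdef]
          simp only [Matrix.mul_assoc]
      _ = Aᵀ * (((1 : Matrix (Fin d₂) (Fin d₂) ℝ) - S) * W)
          * (((1 : Matrix (Fin d₂) (Fin d₂) ℝ) - S) * A) := by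
          rw [hAAT, Matrix.mul_assoc Aᵀ]
      _ = P := by rw [h1SW, Matrix.mul_one, hPdef, Matrix.mul_assoc]
  have hPT : Pᵀ = P := by
    simp only [hPdef, Matrix.transpose_mul, Matrix.transpose_sub, Matrix.transpose_one,
      Matrix.transpose_transpose, hST, Matrix.mul_assoc]
  have hpsd := aux_main_psd d₂ S hS ρ hρ0 hρ1 hlamρ hlam1 n
  have hmain : ∀ v : (Fin d₁ ⊕ Fin d₂) → ℝ, eNorm v ≤ 1 →
      eNorm ((L⁻¹ * BF ^ (n+1) * L) *ᵥ v) ≤ ρ ^ n := by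
    intro v hv
    set X : Matrix (Fin d₁ ⊕ Fin d₂) (Fin d₁ ⊕ Fin d₂) ℝ := L⁻¹ * BF ^ (n+1) * L with hXdef
    set u : Fin d₂ → ℝ := A *ᵥ v with hu
    have hvv1 : v ⬝ᵥ v ≤ 1 := by
      have hnn : 0 ≤ ∑ i, (v i) ^ 2 := Finset.sum_nonneg fun i _ => sq_nonneg _
      have hs := Real.sq_sqrt hnn
      rw [eNorm] at hv
      have hsum1 : ∑ i, (v i) ^ 2 ≤ 1 := by nlinarith [Real.sqrt_nonneg (∑ i, (v i) ^ 2)]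
      calc v ⬝ᵥ v = ∑ i, (v i) ^ 2 := by simp [dotProduct, pow_two]
        _ ≤ 1 := hsum1
    have e1 : (X *ᵥ v) ⬝ᵥ (X *ᵥ v) = u ⬝ᵥ (G *ᵥ u) := by
      rw [aux_qf_eq X v, hXdef, hGram, aux_conj_qf, hu]
    have e2 : u ⬝ᵥ (G *ᵥ u) ≤ ρ ^ (2*n) * (u ⬝ᵥ ((1 - S) *ᵥ u)) := by
      have h0 := hpsd.dotProduct_mulVec_nonneg u
      rw [star_trivial, Matrix.sub_mulVec, Matrix.smul_mulVec, dotProduct_sub,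
        dotProduct_smul, smul_eq_mul] at h0
      rw [hGdef]
      linarith
    have e3 : u ⬝ᵥ ((1 - S) *ᵥ u) = v ⬝ᵥ (P *ᵥ v) := by
      rw [hu, ← aux_conj_qf, hPdef]
    have e4 : v ⬝ᵥ (P *ᵥ v) ≤ v ⬝ᵥ v := by
      have h1P : ((1 - P) *ᵥ v) ⬝ᵥ ((1 - P) *ᵥ v) = v ⬝ᵥ v - v ⬝ᵥ (P *ᵥ v) := by
        rw [aux_qf_eq, show ((1 : Matrix (Fin d₁ ⊕ Fin d₂) (Fin d₁ ⊕ Fin d₂) ℝ) - P)ᵀ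
              * ((1 : Matrix (Fin d₁ ⊕ Fin d₂) (Fin d₁ ⊕ Fin d₂) ℝ) - P) = 1 - P from by
            rw [Matrix.transpose_sub, Matrix.transpose_one, hPT, Matrix.mul_sub, Matrix.mul_one,
              Matrix.sub_mul, Matrix.one_mul, hPP]
            abel,
          Matrix.sub_mulVec, Matrix.one_mulVec, dotProduct_sub]
      have h2P : 0 ≤ ((1 - P) *ᵥ v) ⬝ᵥ ((1 - P) *ᵥ v) := by
        have := Finset.sum_nonneg (s := Finset.univ)
          fun i _ => mul_self_nonneg (((1 - P) *ᵥ v) i)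
        simpa [dotProduct] using this
      linarith
    have e5 : (X *ᵥ v) ⬝ᵥ (X *ᵥ v) ≤ ρ ^ (2*n) := by
      have h6 := mul_le_mul_of_nonneg_left e4 (pow_nonneg hρ0 (2*n))
      have h7 := mul_le_mul_of_nonneg_left hvv1 (pow_nonneg hρ0 (2*n))
      rw [mul_one] at h7
      calc (X *ᵥ v) ⬝ᵥ (X *ᵥ v) = u ⬝ᵥ (G *ᵥ u) := e1
        _ ≤ ρ ^ (2*n) * (u ⬝ᵥ ((1 - S) *ᵥ u)) := e2
        _ = ρ ^ (2*n) * (v ⬝ᵥ (P *ᵥ v)) := by rw [e3]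
        _ ≤ ρ ^ (2*n) * (v ⬝ᵥ v) := h6
        _ ≤ ρ ^ (2*n) := h7
    have hXsum : ∑ i, ((X *ᵥ v) i) ^ 2 = (X *ᵥ v) ⬝ᵥ (X *ᵥ v) := by
      simp [dotProduct, pow_two]
    rw [show (L⁻¹ * BF ^ (n+1) * L) *ᵥ v = X *ᵥ v from by rw [hXdef], eNorm, hXsum]
    calc Real.sqrt ((X *ᵥ v) ⬝ᵥ (X *ᵥ v)) ≤ Real.sqrt (ρ ^ (2*n)) := Real.sqrt_le_sqrt e5
      _ = ρ ^ n := by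
          rw [show 2*n = n*2 from by ring, pow_mul, Real.sqrt_sq (pow_nonneg hρ0 n)]
  rw [hNpow (n+1)]
  apply Real.sSup_le _ (pow_nonneg hρ0 n)
  rintro r ⟨v, hv, rfl⟩
  exact hmain v hv

end
end
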